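/- arXiv:2311.01938 — 4 statements merged into one kernel-verified Lean document; each statement's English description precedes it below -/
import Mathlib

section
/- Let χ ∈ 𝒫_{0,rK̃} (a function of the angles Q only) and f ∈ 𝒫_{l,sK̃} for nonnegative integers l, s, r. Then for every integer j with 1 ≤ j ≤ l, the iterated Lie derivative L_χ^j f belongs to 𝒫_{l−j,(s+jr)K̃}; moreover L_χ^j f = 0 for every j > l. -/
open Complex

noncomputable section

/-- Partial derivative of `f(P,Q)` with respect to the action variable `P i`. -/
def pderivP {n : ℕ} (f : (Fin n → ℝ) × (Fin n → ℝ) → ℝ) (i : Fin n) :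
    (Fin n → ℝ) × (Fin n → ℝ) → ℝ :=
  fun x => deriv (fun t => f (Function.update x.1 i t, x.2)) (x.1 i)

/-- Partial derivative of `f(P,Q)` with respect to the angle variable `Q i`. -/
def pderivQ {n : ℕ} (f : (Fin n → ℝ) × (Fin n → ℝ) → ℝ) (i : Fin n) :
    (Fin n → ℝ) × (Fin n → ℝ) → ℝ :=
  fun x => deriv (fun t => f (x.1, Function.update x.2 i t)) (x.2 i)

/-- Poisson bracket `{f,g} = Σ_i (∂f/∂Q_i ∂g/∂P_i − ∂f/∂P_i ∂g/∂Q_i)`. -/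
def poissonBracket {n : ℕ} (f g : (Fin n → ℝ) × (Fin n → ℝ) → ℝ) :
    (Fin n → ℝ) × (Fin n → ℝ) → ℝ :=
  fun x => ∑ i, (pderivQ f i x * pderivP g i x - pderivP f i x * pderivQ g i x)

/-- The class `𝒫_{l,d}` of real-valued functions
`f(P,Q) = Σ_{|j|₁ = l} Σ_{|k|₁ ≤ d} c_{j,k} P^j e^{i k·Q}`, with `c_{j,-k} = conj (c_{j,k})`. -/
def PClass (n l d : ℕ) : Set ((Fin n → ℝ) × (Fin n → ℝ) → ℝ) :=
  { f | ∃ c : (Fin n → ℕ) → (Fin n → ℤ) → ℂ,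
      (∀ j k, (∑ i, j i) ≠ l → c j k = 0) ∧
      (∀ j k, (d : ℤ) < ∑ i, |k i| → c j k = 0) ∧
      (∀ j k, c j (-k) = (starRingEnd ℂ) (c j k)) ∧
      (∀ P Q : Fin n → ℝ, (f (P, Q) : ℂ) =
        ∑ᶠ (j : Fin n → ℕ) (k : Fin n → ℤ),
          c j k * (∏ i, (P i : ℂ) ^ (j i)) *
            Complex.exp (Complex.I * ∑ i, (k i : ℂ) * (Q i : ℂ))) }


open Complex Finset

namespace PAux
variable {n : ℕ}


def Jset (n l : ℕ) : Finset (Fin n → ℕ) :=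
  (Fintype.piFinset fun _ => Finset.range (l+1)).filter fun j => ∑ i, j i = l

def Kset (n d : ℕ) : Finset (Fin n → ℤ) :=
  (Fintype.piFinset fun _ => Finset.Icc (-(d:ℤ)) d).filter fun k => ∑ i, |k i| ≤ (d:ℤ)

lemma mem_Jset {l : ℕ} {j : Fin n → ℕ} : j ∈ Jset n l ↔ ∑ i, j i = l := by
  simp only [Jset, Finset.mem_filter, Fintype.mem_piFinset, Finset.mem_range]
  refine ⟨fun h => h.2, fun h => ⟨fun i => ?_, h⟩⟩
  have h2 := Finset.single_le_sum (f := fun i => j i) (fun i _ => Nat.zero_le _) (Finset.mem_univ i)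
  omega

lemma mem_Kset {d : ℕ} {k : Fin n → ℤ} : k ∈ Kset n d ↔ ∑ i, |k i| ≤ (d:ℤ) := by
  simp only [Kset, Finset.mem_filter, Fintype.mem_piFinset, Finset.mem_Icc]
  refine ⟨fun h => h.2, fun h => ⟨fun i => ?_, h⟩⟩
  have h1 := Finset.single_le_sum (f := fun i => |k i|) (fun i _ => abs_nonneg _) (Finset.mem_univ i)
  have h2 := abs_le.mp (le_trans h1 h)
  exact ⟨h2.1, h2.2⟩

lemma finsum_finsum_eq_sum_sum {α β : Type*} (J : Finset α) (K : Finset β) (F : α → β → ℂ)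
    (hK : ∀ j k, k ∉ K → F j k = 0) (hJ : ∀ j, j ∉ J → ∀ k, F j k = 0) :
    ∑ᶠ (j) (k), F j k = ∑ j ∈ J, ∑ k ∈ K, F j k := by
  have hinner : ∀ j, ∑ᶠ k, F j k = ∑ k ∈ K, F j k := fun j =>
    finsum_eq_sum_of_support_subset _ (fun k hk => by
      by_contra h; exact hk (hK j k h))
  rw [finsum_congr hinner]
  exact finsum_eq_sum_of_support_subset _ (fun j hj => by
    by_contra h
    exact hj (show (fun x => ∑ k ∈ K, F x k) j = 0 from
      Finset.sum_eq_zero (fun k _ => hJ j h k)))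

lemma ofReal_deriv {g : ℝ → ℝ} {D : ℂ} {x : ℝ}
    (h : HasDerivAt (fun t => ((g t : ℝ) : ℂ)) D x) : ((deriv g x : ℝ) : ℂ) = D := by
  have hre : HasDerivAt g D.re x := by
    have := (Complex.reCLM.hasFDerivAt (x := ((g x : ℝ) : ℂ))).comp_hasDerivAt x h
    simpa [Function.comp_def] using this
  have h2 : HasDerivAt (fun t => ((g t : ℝ) : ℂ)) ((D.re : ℝ) : ℂ) x := hre.ofReal_comp
  rw [hre.deriv, ← h.unique h2]


lemma hasDerivAt_term_P (c E : ℂ) (j : Fin n → ℕ) (P : Fin n → ℝ) (i : Fin n) :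
    HasDerivAt (fun t : ℝ => c * (∏ i', ((Function.update P i t i' : ℝ) : ℂ) ^ (j i')) * E)
      (c * ((j i : ℂ) * ((P i : ℝ) : ℂ) ^ (j i - 1) *
        ∏ i' ∈ Finset.univ.erase i, ((P i' : ℝ) : ℂ) ^ (j i')) * E) (P i) := by
  have hprod : ∀ t : ℝ, (∏ i', ((Function.update P i t i' : ℝ) : ℂ) ^ (j i')) =
      ((t : ℝ) : ℂ) ^ (j i) * ∏ i' ∈ Finset.univ.erase i, ((P i' : ℝ) : ℂ) ^ (j i') := by
    intro t
    rw [← Finset.mul_prod_erase Finset.univ _ (Finset.mem_univ i), Function.update_self]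
    congr 1
    exact Finset.prod_congr rfl fun i' hi' => by
      rw [Function.update_of_ne (Finset.mem_erase.mp hi').1]
  simp only [hprod]
  have h1 : HasDerivAt (fun t : ℝ => ((t : ℝ) : ℂ) ^ (j i))
      ((j i : ℂ) * ((P i : ℝ) : ℂ) ^ (j i - 1)) (P i) :=
    (hasDerivAt_pow (j i) (((P i : ℝ) : ℂ))).comp_ofReal
  exact (((h1.mul_const _).const_mul c).mul_const E)

lemma hasDerivAt_term_Q (C : ℂ) (k : Fin n → ℤ) (Q : Fin n → ℝ) (i : Fin n) :
    HasDerivAt (fun t : ℝ =>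
        C * Complex.exp (Complex.I * ∑ i', (k i' : ℂ) * ((Function.update Q i t i' : ℝ) : ℂ)))
      (C * (Complex.I * (k i : ℂ)) *
        Complex.exp (Complex.I * ∑ i', (k i' : ℂ) * ((Q i' : ℝ) : ℂ))) (Q i) := by
  set B : ℂ := ∑ i' ∈ Finset.univ.erase i, (k i' : ℂ) * ((Q i' : ℝ) : ℂ) with hB
  have hsum : ∀ t : ℝ, (∑ i', (k i' : ℂ) * ((Function.update Q i t i' : ℝ) : ℂ)) =
      (k i : ℂ) * ((t : ℝ) : ℂ) + B := by
    intro t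
    rw [← Finset.add_sum_erase Finset.univ _ (Finset.mem_univ i), Function.update_self]
    congr 1
    exact Finset.sum_congr rfl fun i' hi' => by
      rw [Function.update_of_ne (Finset.mem_erase.mp hi').1]
  simp only [hsum]
  have h0 : HasDerivAt (fun t : ℝ => ((t : ℝ) : ℂ)) 1 (Q i) := by
    simpa using (hasDerivAt_id (Q i)).ofReal_comp
  have h1 : HasDerivAt (fun t : ℝ => Complex.I * ((k i : ℂ) * ((t : ℝ) : ℂ) + B))
      (Complex.I * (k i : ℂ)) (Q i) := by
    have := ((h0.const_mul ((k i : ℂ))).add_const B).const_mul Complex.I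
    simpa using this
  have h2 := (h1.cexp).const_mul C
  have hQ : (∑ i', (k i' : ℂ) * ((Q i' : ℝ) : ℂ)) = (k i : ℂ) * ((Q i : ℝ) : ℂ) + B := by
    rw [← Finset.add_sum_erase Finset.univ _ (Finset.mem_univ i)]
  rw [show C * (Complex.I * (k i : ℂ)) *
        Complex.exp (Complex.I * ∑ i', (k i' : ℂ) * ((Q i' : ℝ) : ℂ)) =
      C * (Complex.exp (Complex.I * ((k i : ℂ) * ((Q i : ℝ) : ℂ) + B)) * (Complex.I * (k i : ℂ)))
    from by rw [hQ]; ring]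
  exact h2


section Rep
variable {l d : ℕ} {f : (Fin n → ℝ) × (Fin n → ℝ) → ℝ} {c : (Fin n → ℕ) → (Fin n → ℤ) → ℂ}

lemma rep_sum
    (hdeg : ∀ j k, (∑ i, j i) ≠ l → c j k = 0)
    (hfreq : ∀ j k, (d : ℤ) < ∑ i, |k i| → c j k = 0)
    (hrep : ∀ P Q : Fin n → ℝ, (f (P, Q) : ℂ) =
      ∑ᶠ (j : Fin n → ℕ) (k : Fin n → ℤ),
        c j k * (∏ i, (P i : ℂ) ^ (j i)) * Complex.exp (Complex.I * ∑ i, (k i : ℂ) * (Q i : ℂ)))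
    (P Q : Fin n → ℝ) :
    (f (P, Q) : ℂ) = ∑ j ∈ Jset n l, ∑ k ∈ Kset n d,
      c j k * (∏ i, (P i : ℂ) ^ (j i)) *
        Complex.exp (Complex.I * ∑ i, (k i : ℂ) * (Q i : ℂ)) := by
  rw [hrep P Q]
  apply finsum_finsum_eq_sum_sum
  · intro j k hk
    rw [hfreq j k (by rw [mem_Kset] at hk; omega), zero_mul, zero_mul]
  · intro j hj k
    rw [hdeg j k (by rwa [mem_Jset] at hj), zero_mul, zero_mul]

lemma pderivP_rep
    (hdeg : ∀ j k, (∑ i, j i) ≠ l → c j k = 0)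
    (hfreq : ∀ j k, (d : ℤ) < ∑ i, |k i| → c j k = 0)
    (hrep : ∀ P Q : Fin n → ℝ, (f (P, Q) : ℂ) =
      ∑ᶠ (j : Fin n → ℕ) (k : Fin n → ℤ),
        c j k * (∏ i, (P i : ℂ) ^ (j i)) * Complex.exp (Complex.I * ∑ i, (k i : ℂ) * (Q i : ℂ)))
    (P Q : Fin n → ℝ) (i : Fin n) :
    ((pderivP f i (P, Q) : ℝ) : ℂ) = ∑ j ∈ Jset n l, ∑ k ∈ Kset n d,
      c j k * ((j i : ℂ) * (P i : ℂ) ^ (j i - 1) *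
        ∏ i' ∈ Finset.univ.erase i, (P i' : ℂ) ^ (j i')) *
        Complex.exp (Complex.I * ∑ i', (k i' : ℂ) * (Q i' : ℂ)) := by
  have hD : HasDerivAt (fun t : ℝ => ∑ j ∈ Jset n l, ∑ k ∈ Kset n d,
      c j k * (∏ i', ((Function.update P i t i' : ℝ) : ℂ) ^ (j i')) *
        Complex.exp (Complex.I * ∑ i', (k i' : ℂ) * (Q i' : ℂ)))
      (∑ j ∈ Jset n l, ∑ k ∈ Kset n d,
        c j k * ((j i : ℂ) * (P i : ℂ) ^ (j i - 1) *
          ∏ i' ∈ Finset.univ.erase i, (P i' : ℂ) ^ (j i')) *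
          Complex.exp (Complex.I * ∑ i', (k i' : ℂ) * (Q i' : ℂ))) (P i) :=
    HasDerivAt.fun_sum fun j _ => HasDerivAt.fun_sum fun k _ => hasDerivAt_term_P _ _ j P i
  have hfun : (fun t : ℝ => ((f (Function.update P i t, Q) : ℝ) : ℂ)) =
      fun t : ℝ => ∑ j ∈ Jset n l, ∑ k ∈ Kset n d,
        c j k * (∏ i', ((Function.update P i t i' : ℝ) : ℂ) ^ (j i')) *
          Complex.exp (Complex.I * ∑ i', (k i' : ℂ) * (Q i' : ℂ)) :=
    funext fun t => rep_sum hdeg hfreq hrep _ Q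
  rw [← hfun] at hD
  exact ofReal_deriv hD

lemma pderivQ_rep
    (hdeg : ∀ j k, (∑ i, j i) ≠ l → c j k = 0)
    (hfreq : ∀ j k, (d : ℤ) < ∑ i, |k i| → c j k = 0)
    (hrep : ∀ P Q : Fin n → ℝ, (f (P, Q) : ℂ) =
      ∑ᶠ (j : Fin n → ℕ) (k : Fin n → ℤ),
        c j k * (∏ i, (P i : ℂ) ^ (j i)) * Complex.exp (Complex.I * ∑ i, (k i : ℂ) * (Q i : ℂ)))
    (P Q : Fin n → ℝ) (i : Fin n) :
    ((pderivQ f i (P, Q) : ℝ) : ℂ) = ∑ j ∈ Jset n l, ∑ k ∈ Kset n d,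
      c j k * (∏ i', (P i' : ℂ) ^ (j i')) * (Complex.I * (k i : ℂ)) *
        Complex.exp (Complex.I * ∑ i', (k i' : ℂ) * (Q i' : ℂ)) := by
  have hD : HasDerivAt (fun t : ℝ => ∑ j ∈ Jset n l, ∑ k ∈ Kset n d,
      c j k * (∏ i', (P i' : ℂ) ^ (j i')) *
        Complex.exp (Complex.I * ∑ i', (k i' : ℂ) * ((Function.update Q i t i' : ℝ) : ℂ)))
      (∑ j ∈ Jset n l, ∑ k ∈ Kset n d,
        c j k * (∏ i', (P i' : ℂ) ^ (j i')) * (Complex.I * (k i : ℂ)) *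
          Complex.exp (Complex.I * ∑ i', (k i' : ℂ) * (Q i' : ℂ))) (Q i) :=
    HasDerivAt.fun_sum fun j _ => HasDerivAt.fun_sum fun k _ => hasDerivAt_term_Q _ k Q i
  have hfun : (fun t : ℝ => ((f (P, Function.update Q i t) : ℝ) : ℂ)) =
      fun t : ℝ => ∑ j ∈ Jset n l, ∑ k ∈ Kset n d,
        c j k * (∏ i', (P i' : ℂ) ^ (j i')) *
          Complex.exp (Complex.I * ∑ i', (k i' : ℂ) * ((Function.update Q i t i' : ℝ) : ℂ)) :=
    funext fun t => rep_sum hdeg hfreq hrep P _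
  rw [← hfun] at hD
  exact ofReal_deriv hD

lemma pderivP_zero_of_deg_zero {d : ℕ} {f : (Fin n → ℝ) × (Fin n → ℝ) → ℝ}
    (hf : f ∈ PClass n 0 d) (i : Fin n) (x : (Fin n → ℝ) × (Fin n → ℝ)) :
    pderivP f i x = 0 := by
  obtain ⟨c, hdeg, hfreq, _, hrep⟩ := hf
  have h := pderivP_rep hdeg hfreq hrep x.1 x.2 i
  have hz : ∑ j ∈ Jset n 0, ∑ k ∈ Kset n d,
      c j k * ((j i : ℂ) * (x.1 i : ℂ) ^ (j i - 1) *
        ∏ i' ∈ Finset.univ.erase i, (x.1 i' : ℂ) ^ (j i')) *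
        Complex.exp (Complex.I * ∑ i', (k i' : ℂ) * (x.2 i' : ℂ)) = 0 := by
    apply Finset.sum_eq_zero
    intro j hj
    apply Finset.sum_eq_zero
    intro k _
    have hj0 : j i = 0 := by
      rw [mem_Jset] at hj
      have := Finset.sum_eq_zero_iff.mp hj i (Finset.mem_univ i)
      simpa using this
    simp [hj0]
  rw [hz] at h
  exact_mod_cast h

lemma bracket_zero_of_deg_zero {d e : ℕ} {f χ : (Fin n → ℝ) × (Fin n → ℝ) → ℝ}
    (hf : f ∈ PClass n 0 d) (hχ : χ ∈ PClass n 0 e) :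
    poissonBracket f χ = 0 := by
  funext x
  simp only [poissonBracket, Pi.zero_apply]
  apply Finset.sum_eq_zero
  intro i _
  rw [pderivP_zero_of_deg_zero hf i x, pderivP_zero_of_deg_zero hχ i x]
  ring

lemma bracket_zero_left (χ : (Fin n → ℝ) × (Fin n → ℝ) → ℝ) :
    poissonBracket (0 : (Fin n → ℝ) × (Fin n → ℝ) → ℝ) χ = 0 := by
  funext x
  simp only [poissonBracket, Pi.zero_apply]
  apply Finset.sum_eq_zero
  intro i _
  have h1 : pderivP (0 : (Fin n → ℝ) × (Fin n → ℝ) → ℝ) i x = 0 := by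
    simp [pderivP]
  have h2 : pderivQ (0 : (Fin n → ℝ) × (Fin n → ℝ) → ℝ) i x = 0 := by
    simp [pderivQ]
  rw [h1, h2]
  ring

lemma sum_update_pred {j : Fin n → ℕ} {i : Fin n} (hne : j i ≠ 0) :
    ∑ i', Function.update j i (j i - 1) i' = (∑ i', j i') - 1 := by
  rw [Finset.sum_update_of_mem (Finset.mem_univ i)]
  rw [← Finset.add_sum_erase Finset.univ j (Finset.mem_univ i)]
  rw [Finset.sdiff_singleton_eq_erase]
  omega

lemma kappa_sum_bound {k k' : Fin n → ℤ} {d e : ℕ}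
    (hk : ∑ i, |k i| ≤ (d:ℤ)) (hk' : ∑ i, |k' i| ≤ (e:ℤ)) :
    ∑ i, |(k + k') i| ≤ ((d + e : ℕ) : ℤ) := by
  calc ∑ i, |(k + k') i| ≤ ∑ i, (|k i| + |k' i|) :=
        Finset.sum_le_sum fun i _ => abs_add_le _ _
    _ = (∑ i, |k i|) + ∑ i, |k' i| := Finset.sum_add_distrib
    _ ≤ (d:ℤ) + e := add_le_add hk hk'
    _ = ((d + e : ℕ) : ℤ) := by push_cast; ring

lemma prod_update_pred (P : Fin n → ℝ) (j : Fin n → ℕ) (i : Fin n) (hne : j i ≠ 0) :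
    (∏ i', (P i' : ℂ) ^ (Function.update j i (j i - 1) i')) =
      (P i : ℂ) ^ (j i - 1) * ∏ i' ∈ Finset.univ.erase i, (P i' : ℂ) ^ (j i') := by
  rw [← Finset.mul_prod_erase Finset.univ _ (Finset.mem_univ i), Function.update_self]
  congr 1
  exact Finset.prod_congr rfl fun i' hi' => by
    rw [Function.update_of_ne (Finset.mem_erase.mp hi').1]

lemma exp_add_freq (Q : Fin n → ℝ) (k k' : Fin n → ℤ) :
    Complex.exp (Complex.I * ∑ i', ((k + k') i' : ℂ) * (Q i' : ℂ)) =
      Complex.exp (Complex.I * ∑ i', (k i' : ℂ) * (Q i' : ℂ)) *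
        Complex.exp (Complex.I * ∑ i', (k' i' : ℂ) * (Q i' : ℂ)) := by
  rw [← Complex.exp_add]
  congr 1
  rw [show (∑ i', ((k + k') i' : ℂ) * (Q i' : ℂ)) =
      (∑ i', (k i' : ℂ) * (Q i' : ℂ)) + ∑ i', (k' i' : ℂ) * (Q i' : ℂ) from by
    rw [← Finset.sum_add_distrib]
    exact Finset.sum_congr rfl fun i' _ => by
      simp [Pi.add_apply]; push_cast; ring]
  ring

lemma Kset_neg {d : ℕ} {k : Fin n → ℤ} (hk : k ∈ Kset n d) : -k ∈ Kset n d := by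
  rw [mem_Kset] at hk ⊢
  simpa [Pi.neg_apply, abs_neg] using hk

lemma bracket_mem {l d e : ℕ} {f χ : (Fin n → ℝ) × (Fin n → ℝ) → ℝ}
    (hf : f ∈ PClass n (l+1) d) (hχ : χ ∈ PClass n 0 e) :
    poissonBracket f χ ∈ PClass n l (d + e) := by
  classical
  have hχ' := hχ
  obtain ⟨c, hcdeg, hcfreq, hcconj, hcrep⟩ := hf
  obtain ⟨a, hadeg, hafreq, haconj, harep⟩ := hχ
  set T : Finset (((Fin n → ℕ) × (Fin n → ℤ)) × ((Fin n → ℕ) × (Fin n → ℤ))) :=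
    (Jset n (l+1) ×ˢ Kset n d) ×ˢ (Jset n 0 ×ˢ Kset n e) with hT
  set c' : (Fin n → ℕ) → (Fin n → ℤ) → ℂ := fun m κ => -∑ i : Fin n, ∑ t ∈ T,
      if (m, κ) = (Function.update t.1.1 i (t.1.1 i - 1), t.1.2 + t.2.2) ∧ t.1.1 i ≠ 0 then
        c t.1.1 t.1.2 * a t.2.1 t.2.2 * (t.1.1 i : ℂ) * (Complex.I * (t.2.2 i : ℂ))
      else 0 with hc'
  have h1 : ∀ m κ, (∑ i, m i) ≠ l → c' m κ = 0 := by
    intro m κ hm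
    simp only [hc']
    rw [neg_eq_zero]
    apply Finset.sum_eq_zero
    intro i _
    apply Finset.sum_eq_zero
    intro t ht
    split_ifs with h
    · obtain ⟨hkey, hne⟩ := h
      by_cases hc0 : c t.1.1 t.1.2 = 0
      · simp [hc0]
      exfalso
      have hSg : ∑ i', t.1.1 i' = l + 1 := by
        by_contra hh; exact hc0 (hcdeg _ _ hh)
      have hmeq : m = Function.update t.1.1 i (t.1.1 i - 1) := congrArg Prod.fst hkey
      apply hm
      rw [hmeq, sum_update_pred hne, hSg]
      omega
    · rfl
  have h2 : ∀ m κ, ((d + e : ℕ) : ℤ) < ∑ i, |κ i| → c' m κ = 0 := by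
    intro m κ hκ
    simp only [hc']
    rw [neg_eq_zero]
    apply Finset.sum_eq_zero
    intro i _
    apply Finset.sum_eq_zero
    intro t ht
    split_ifs with h
    · exfalso
      obtain ⟨hkey, hne⟩ := h
      have hκeq : κ = t.1.2 + t.2.2 := congrArg Prod.snd hkey
      rw [hT, Finset.mem_product] at ht
      have hk := (Finset.mem_product.mp ht.1).2
      have hk' := (Finset.mem_product.mp ht.2).2
      rw [mem_Kset] at hk hk'
      have := kappa_sum_bound hk hk'
      rw [hκeq] at hκ
      omega
    · rfl
  have h3 : ∀ m κ, c' m (-κ) = (starRingEnd ℂ) (c' m κ) := by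
    intro m κ
    simp only [hc']
    rw [map_neg, neg_inj, map_sum]
    apply Finset.sum_congr rfl
    intro i _
    rw [map_sum]
    have hmemT : ∀ t : ((Fin n → ℕ) × (Fin n → ℤ)) × ((Fin n → ℕ) × (Fin n → ℤ)),
        t ∈ T → ((t.1.1, -t.1.2), (t.2.1, -t.2.2)) ∈ T := by
      intro t ht
      simp only [hT, Finset.mem_product] at ht ⊢
      exact ⟨⟨ht.1.1, Kset_neg ht.1.2⟩, ht.2.1, Kset_neg ht.2.2⟩
    refine Finset.sum_nbij' (fun t => ((t.1.1, -t.1.2), (t.2.1, -t.2.2)))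
      (fun t => ((t.1.1, -t.1.2), (t.2.1, -t.2.2)))
      (fun t ht => hmemT t ht) (fun t ht => hmemT t ht)
      (fun t _ => by simp) (fun t _ => by simp) ?_
    intro t ht
    rw [apply_ite (starRingEnd ℂ), map_zero]
    have hiff : ((m, -κ) = (Function.update t.1.1 i (t.1.1 i - 1), t.1.2 + t.2.2) ∧ t.1.1 i ≠ 0)
        ↔ ((m, κ) = (Function.update (((t.1.1, -t.1.2), (t.2.1, -t.2.2)) : ((Fin n → ℕ) × (Fin n → ℤ)) × ((Fin n → ℕ) × (Fin n → ℤ))).1.1 i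
            ((((t.1.1, -t.1.2), (t.2.1, -t.2.2)) : ((Fin n → ℕ) × (Fin n → ℤ)) × ((Fin n → ℕ) × (Fin n → ℤ))).1.1 i - 1),
            (((t.1.1, -t.1.2), (t.2.1, -t.2.2)) : _).1.2 + (((t.1.1, -t.1.2), (t.2.1, -t.2.2)) : _).2.2)
          ∧ (((t.1.1, -t.1.2), (t.2.1, -t.2.2)) : _).1.1 i ≠ 0) := by
      simp only [Prod.mk.injEq]
      constructor
      · rintro ⟨⟨hm1, hk1⟩, hne⟩
        refine ⟨⟨hm1, ?_⟩, hne⟩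
        rw [← neg_add]
        rw [← hk1, neg_neg]
      · rintro ⟨⟨hm1, hk1⟩, hne⟩
        refine ⟨⟨hm1, ?_⟩, hne⟩
        rw [← neg_add] at hk1
        rw [hk1, neg_neg]
    rw [if_congr hiff rfl rfl]
    split_ifs with hcond
    · rw [hcconj, haconj]
      simp only [map_mul, Complex.conj_conj, Complex.conj_I, map_natCast, map_intCast,
        Pi.neg_apply, Int.cast_neg, map_neg]
      ring
    · rfl
  refine ⟨c', h1, h2, h3, ?_⟩
  intro P Q
  rw [finsum_finsum_eq_sum_sum (Jset n l) (Kset n (d+e))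
      (fun m κ => c' m κ * (∏ i, (P i : ℂ) ^ (m i)) *
        Complex.exp (Complex.I * ∑ i, (κ i : ℂ) * (Q i : ℂ)))
      (fun m κ hκ => by
        simp only [h2 m κ (by rw [mem_Kset] at hκ; omega), zero_mul])
      (fun m hm κ => by
        simp only [h1 m κ (by rwa [mem_Jset] at hm), zero_mul])]
  have hz : ∀ i, pderivP χ i (P, Q) = 0 := fun i => pderivP_zero_of_deg_zero hχ' i (P, Q)
  have hL : ((poissonBracket f χ (P, Q) : ℝ) : ℂ) =
      -∑ i : Fin n,
        (∑ j ∈ Jset n (l+1), ∑ k ∈ Kset n d,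
          c j k * ((j i : ℂ) * (P i : ℂ) ^ (j i - 1) *
            ∏ i' ∈ Finset.univ.erase i, (P i' : ℂ) ^ (j i')) *
            Complex.exp (Complex.I * ∑ i', (k i' : ℂ) * (Q i' : ℂ))) *
        (∑ j' ∈ Jset n 0, ∑ k' ∈ Kset n e,
          a j' k' * (∏ i', (P i' : ℂ) ^ (j' i')) * (Complex.I * (k' i : ℂ)) *
            Complex.exp (Complex.I * ∑ i', (k' i' : ℂ) * (Q i' : ℂ))) := by
    simp only [poissonBracket]
    push_cast
    rw [← Finset.sum_neg_distrib]
    apply Finset.sum_congr rfl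
    intro i _
    rw [hz i]
    rw [← pderivP_rep hcdeg hcfreq hcrep P Q i, ← pderivQ_rep hadeg hafreq harep P Q i]
    push_cast
    ring
  rw [hL]
  -- abbreviations via explicit terms
  have hc'app : ∀ m κ, c' m κ = -∑ i : Fin n, ∑ t ∈ T,
      (if (m, κ) = (Function.update t.1.1 i (t.1.1 i - 1), t.1.2 + t.2.2) ∧ t.1.1 i ≠ 0 then
        c t.1.1 t.1.2 * a t.2.1 t.2.2 * (t.1.1 i : ℂ) * (Complex.I * (t.2.2 i : ℂ))
      else 0) := fun _ _ => rfl
  set F : Fin n → (((Fin n → ℕ) × (Fin n → ℤ)) × ((Fin n → ℕ) × (Fin n → ℤ))) →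
      ((Fin n → ℕ) × (Fin n → ℤ)) → ℂ := fun i t w =>
    if (w.1, w.2) = (Function.update t.1.1 i (t.1.1 i - 1), t.1.2 + t.2.2) ∧ t.1.1 i ≠ 0 then
      c t.1.1 t.1.2 * a t.2.1 t.2.2 * (t.1.1 i : ℂ) * (Complex.I * (t.2.2 i : ℂ)) *
        (∏ i', (P i' : ℂ) ^ (w.1 i')) *
        Complex.exp (Complex.I * ∑ i', (w.2 i' : ℂ) * (Q i' : ℂ))
    else 0 with hF
  have hA : ∀ i : Fin n,
      (∑ j ∈ Jset n (l+1), ∑ k ∈ Kset n d,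
          c j k * ((j i : ℂ) * (P i : ℂ) ^ (j i - 1) *
            ∏ i' ∈ Finset.univ.erase i, (P i' : ℂ) ^ (j i')) *
            Complex.exp (Complex.I * ∑ i', (k i' : ℂ) * (Q i' : ℂ))) *
        (∑ j' ∈ Jset n 0, ∑ k' ∈ Kset n e,
          a j' k' * (∏ i', (P i' : ℂ) ^ (j' i')) * (Complex.I * (k' i : ℂ)) *
            Complex.exp (Complex.I * ∑ i', (k' i' : ℂ) * (Q i' : ℂ)))
      = ∑ t ∈ T, ∑ w ∈ Jset n l ×ˢ Kset n (d+e),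
          F i t w := by
    intro i
    rw [← Finset.sum_product', ← Finset.sum_product', Finset.sum_mul_sum, ← Finset.sum_product',
      ← hT]
    apply Finset.sum_congr rfl
    intro t ht
    simp only [hF, Prod.mk.eta, ite_and]
    rw [Finset.sum_ite_eq' (Jset n l ×ˢ Kset n (d+e))
      ((Function.update t.1.1 i (t.1.1 i - 1), t.1.2 + t.2.2))]
    simp only [hT, Finset.mem_product] at ht
    obtain ⟨⟨hj, hk⟩, hj', hk'⟩ := ht
    by_cases hne : t.1.1 i = 0
    · simp [hne]
    by_cases hc0 : c t.1.1 t.1.2 = 0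
    · simp [hc0]
    by_cases ha0 : a t.2.1 t.2.2 = 0
    · simp [ha0]
    have hSg : ∑ i', t.1.1 i' = l + 1 := mem_Jset.mp hj
    have hmem : (Function.update t.1.1 i (t.1.1 i - 1), t.1.2 + t.2.2) ∈
        Jset n l ×ˢ Kset n (d+e) := by
      rw [Finset.mem_product]
      refine ⟨?_, ?_⟩
      · rw [mem_Jset, sum_update_pred hne, hSg]
        omega
      · rw [mem_Kset]
        exact kappa_sum_bound (mem_Kset.mp hk) (mem_Kset.mp hk')
    rw [if_pos hmem, if_pos hne]
    have hpone : (∏ i', (P i' : ℂ) ^ (t.2.1 i')) = 1 :=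
      Finset.prod_eq_one fun i' _ => by
        rw [(Finset.sum_eq_zero_iff.mp (mem_Jset.mp hj') i' (Finset.mem_univ i')), pow_zero]
    rw [hpone]
    rw [prod_update_pred P t.1.1 i hne, exp_add_freq Q t.1.2 t.2.2]
    ring
  calc -∑ i : Fin n,
      (∑ j ∈ Jset n (l+1), ∑ k ∈ Kset n d,
          c j k * ((j i : ℂ) * (P i : ℂ) ^ (j i - 1) *
            ∏ i' ∈ Finset.univ.erase i, (P i' : ℂ) ^ (j i')) *
            Complex.exp (Complex.I * ∑ i', (k i' : ℂ) * (Q i' : ℂ))) *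
        (∑ j' ∈ Jset n 0, ∑ k' ∈ Kset n e,
          a j' k' * (∏ i', (P i' : ℂ) ^ (j' i')) * (Complex.I * (k' i : ℂ)) *
            Complex.exp (Complex.I * ∑ i', (k' i' : ℂ) * (Q i' : ℂ)))
      = -∑ i : Fin n, ∑ t ∈ T, ∑ w ∈ Jset n l ×ˢ Kset n (d+e),
          F i t w := by rw [neg_inj]; exact Finset.sum_congr rfl fun i _ => hA i
    _ = -∑ w ∈ Jset n l ×ˢ Kset n (d+e), ∑ i : Fin n, ∑ t ∈ T,
          F i t w := by
        rw [neg_inj]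
        have step1 : (∑ i : Fin n, ∑ t ∈ T, ∑ w ∈ Jset n l ×ˢ Kset n (d+e), F i t w)
            = ∑ i : Fin n, ∑ w ∈ Jset n l ×ˢ Kset n (d+e), ∑ t ∈ T, F i t w :=
          Finset.sum_congr rfl fun i _ => Finset.sum_comm
        rw [step1]
        exact Finset.sum_comm
    _ = ∑ w ∈ Jset n l ×ˢ Kset n (d+e), c' w.1 w.2 * (∏ i, (P i : ℂ) ^ (w.1 i)) *
          Complex.exp (Complex.I * ∑ i, (w.2 i : ℂ) * (Q i : ℂ)) := by
        rw [← Finset.sum_neg_distrib]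
        apply Finset.sum_congr rfl
        intro w _
        rw [hc'app]
        simp only [hF, neg_mul, Finset.sum_mul, ite_mul, zero_mul, neg_neg]
    _ = ∑ m ∈ Jset n l, ∑ κ ∈ Kset n (d+e), c' m κ * (∏ i, (P i : ℂ) ^ (m i)) *
          Complex.exp (Complex.I * ∑ i, (κ i : ℂ) * (Q i : ℂ)) :=
        Finset.sum_product' (Jset n l) (Kset n (d+e))
          (fun m κ => c' m κ * (∏ i, (P i : ℂ) ^ (m i)) *
            Complex.exp (Complex.I * ∑ i, (κ i : ℂ) * (Q i : ℂ)))

end Rep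
end PAux

/-- If `χ ∈ 𝒫_{0,rK̃}` (a function of the angles only) and `f ∈ 𝒫_{l,sK̃}`,
then for every `1 ≤ j ≤ l` the iterated Lie derivative `L_χ^j f` belongs to
`𝒫_{l−j,(s+jr)K̃}`, and `L_χ^j f = 0` for every `j > l`. -/
theorem lieDeriv_iter_mem_PClass_of_deg_zero
    (n Ktil : ℕ) (hn : 1 ≤ n) (hK : 1 ≤ Ktil) (l s r : ℕ)
    (χ f : (Fin n → ℝ) × (Fin n → ℝ) → ℝ)
    (hχ : χ ∈ PClass n 0 (r * Ktil)) (hf : f ∈ PClass n l (s * Ktil)) :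
    (∀ j : ℕ, 1 ≤ j → j ≤ l →
      ((fun g => poissonBracket g χ)^[j]) f ∈ PClass n (l - j) ((s + j * r) * Ktil)) ∧
    (∀ j : ℕ, l < j → ((fun g => poissonBracket g χ)^[j]) f = 0) := by
  have main1 : ∀ j : ℕ, 1 ≤ j → j ≤ l →
      ((fun g => poissonBracket g χ)^[j]) f ∈ PClass n (l - j) ((s + j * r) * Ktil) := by
    intro j
    induction j with
    | zero => omega
    | succ j ih =>
      intro _ hjl
      rcases Nat.eq_zero_or_pos j with hj0 | hjpos
      · subst hj0
        rw [Function.iterate_succ_apply', Function.iterate_zero_apply]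
        have hf' : f ∈ PClass n ((l-1)+1) (s * Ktil) := by
          have h : (l-1)+1 = l := by omega
          rw [h]; exact hf
        have hb := PAux.bracket_mem hf' hχ
        have harith : s * Ktil + r * Ktil = (s + 1 * r) * Ktil := by ring
        rw [harith] at hb
        exact hb
      · have ihh := ih hjpos (by omega)
        rw [Function.iterate_succ_apply']
        have hcls : ((fun g => poissonBracket g χ)^[j]) f ∈
            PClass n ((l - (j+1)) + 1) ((s + j * r) * Ktil) := by
          have h : (l - (j+1)) + 1 = l - j := by omega
          rw [h]; exact ihh
        have hb := PAux.bracket_mem hcls hχ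
        have harith : (s + j * r) * Ktil + r * Ktil = (s + (j+1) * r) * Ktil := by ring
        rwa [harith] at hb
  refine ⟨main1, ?_⟩
  have hl1 : ((fun g => poissonBracket g χ)^[l + 1]) f = 0 := by
    rcases Nat.eq_zero_or_pos l with h0 | hpos
    · subst h0
      rw [Function.iterate_succ_apply', Function.iterate_zero_apply]
      exact PAux.bracket_zero_of_deg_zero hf hχ
    · have hmem := main1 l hpos le_rfl
      rw [Nat.sub_self] at hmem
      rw [Function.iterate_succ_apply']
      exact PAux.bracket_zero_of_deg_zero hmem hχ
  intro j hjl
  have hfix : ∀ m : ℕ, ((fun g => poissonBracket g χ)^[m])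
      (0 : (Fin n → ℝ) × (Fin n → ℝ) → ℝ) = 0 := fun m =>
    Function.iterate_fixed (f := fun g => poissonBracket g χ) (x := 0)
      (show (fun g => poissonBracket g χ) 0 = 0 from PAux.bracket_zero_left χ) m
  rw [show j = (j - (l+1)) + (l+1) from by omega, Function.iterate_add_apply, hl1, hfix]
end
end

section
/- Let n ≥ 1, k ∈ ℤ^n with k ≠ 0, δ > 0, ρ > 0, and ω* ∈ ℝ^n. Then the Lebesgue measure of the set {ω ∈ ℝ^n : ‖ω − ω*‖_∞ ≤ ρ and |k·ω| < δ} is at most (2ρ)^{n−1} · 2δ/‖k‖_∞, where ‖k‖_∞ = max_j |k_j|. -/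
open MeasureTheory

noncomputable section

lemma line_slab (a c δ : ℝ) (ha : a ≠ 0) :
    volume {x : ℝ | |a * x + c| < δ} = ENNReal.ofReal (2 * δ / |a|) := by
  have h : {x : ℝ | |a * x + c| < δ} = Metric.ball (-c / a) (δ / |a|) := by
    ext x
    simp only [Metric.mem_ball, Real.dist_eq, Set.mem_setOf_eq]
    rw [show x - -c / a = x + c / a by ring, lt_div_iff₀ (abs_pos.2 ha), ← abs_mul,
      show (x + c / a) * a = a * x + c by field_simp]
  rw [h, Real.volume_ball, mul_div_assoc]

/-- For any nonzero `k ∈ ℤⁿ`, `δ > 0`, `ρ > 0` and `ω* ∈ ℝⁿ`, the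
Lebesgue measure of the resonant slab
`{ω : ‖ω − ω*‖_∞ ≤ ρ and |k·ω| < δ}` is at most `(2ρ)^{n−1} · 2δ/‖k‖_∞`
(the norm on `Fin n → ℝ` is the sup-norm). -/
theorem measure_resonant_slab_le
    (n : ℕ) (hn : 1 ≤ n) (k : Fin n → ℤ) (hk : k ≠ 0)
    (δ ρ : ℝ) (hδ : 0 < δ) (hρ : 0 < ρ) (ωstar : Fin n → ℝ) :
    volume {ω : Fin n → ℝ | ‖ω - ωstar‖ ≤ ρ ∧ |∑ i, (k i : ℝ) * ω i| < δ}
      ≤ ENNReal.ofReal ((2 * ρ) ^ (n - 1) * (2 * δ / ‖(fun i => (k i : ℝ) : Fin n → ℝ)‖)) := by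
  obtain ⟨m, rfl⟩ : ∃ m, n = m + 1 := ⟨n - 1, (Nat.succ_pred_eq_of_pos hn).symm⟩
  obtain ⟨j, -, hj⟩ := Finset.exists_max_image Finset.univ (fun i => |(k i : ℝ)|)
    ⟨0, Finset.mem_univ 0⟩
  set a : ℝ := (k j : ℝ) with ha_def
  have ha : a ≠ 0 := by
    obtain ⟨i, hi⟩ := Function.ne_iff.1 hk
    have h1 : (1 : ℝ) ≤ |(k i : ℝ)| := by
      have := Int.one_le_abs (by simpa using hi)
      push_cast [← Int.cast_abs]
      exact_mod_cast this
    have := hj i (Finset.mem_univ i)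
    intro h
    rw [h, abs_zero] at this
    linarith
  have hnorm : ‖(fun i => (k i : ℝ) : Fin (m + 1) → ℝ)‖ = |a| := by
    refine le_antisymm ?_ ?_
    · exact (pi_norm_le_iff_of_nonneg (abs_nonneg _)).2 fun i => by
        simpa [Real.norm_eq_abs] using hj i (Finset.mem_univ i)
    · simpa [Real.norm_eq_abs] using norm_le_pi_norm (fun i => (k i : ℝ)) j
  set S := {ω : Fin (m + 1) → ℝ | ‖ω - ωstar‖ ≤ ρ ∧ |∑ i, (k i : ℝ) * ω i| < δ} with hS_def
  have hS : MeasurableSet S := by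
    have h1 : Continuous fun ω : Fin (m + 1) → ℝ => ‖ω - ωstar‖ := by fun_prop
    have h2 : Continuous fun ω : Fin (m + 1) → ℝ => |∑ i, (k i : ℝ) * ω i| := by
      apply Continuous.abs
      exact continuous_finset_sum _ fun i _ => continuous_const.mul (continuous_apply i)
    exact (isClosed_le h1 continuous_const).measurableSet.inter
      (isOpen_lt h2 continuous_const).measurableSet
  set e := MeasurableEquiv.piFinSuccAbove (fun _ : Fin (m + 1) => ℝ) j with he_def
  have hmp : MeasurePreserving e.symm volume volume :=
    (volume_preserving_piFinSuccAbove (fun _ : Fin (m + 1) => ℝ) j).symm e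
  have key : volume S = volume (e.symm ⁻¹' S) :=
    (hmp.measure_preimage hS.nullMeasurableSet).symm
  have hesymm : ∀ (x : ℝ) (y : Fin m → ℝ), e.symm (x, y) = j.insertNth x y := by
    intro x y
    simp [he_def, MeasurableEquiv.piFinSuccAbove, Fin.insertNthEquiv]
  set Q : Set (Fin m → ℝ) :=
    Set.univ.pi fun i => Set.Icc (ωstar (j.succAbove i) - ρ) (ωstar (j.succAbove i) + ρ) with hQ_def
  have hQ : MeasurableSet Q := MeasurableSet.univ_pi fun i => measurableSet_Icc
  have hQvol : volume Q = ENNReal.ofReal ((2 * ρ) ^ m) := by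
    rw [hQ_def, volume_pi_pi]
    simp only [Real.volume_Icc]
    rw [Finset.prod_congr rfl (fun i _ => by rw [show ωstar (j.succAbove i) + ρ -
      (ωstar (j.succAbove i) - ρ) = 2 * ρ by ring]), Finset.prod_const, Finset.card_univ,
      Fintype.card_fin, ENNReal.ofReal_pow (by linarith)]
  have hT : MeasurableSet (e.symm ⁻¹' S) := e.symm.measurable hS
  rw [key, Measure.volume_eq_prod, Measure.prod_apply_symm hT]
  have hbound : ∀ y : Fin m → ℝ,
      volume ((fun x => (x, y)) ⁻¹' (e.symm ⁻¹' S))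
        ≤ Q.indicator (fun _ => ENNReal.ofReal (2 * δ / |a|)) y := by
    intro y
    by_cases hy : y ∈ Q
    · rw [Set.indicator_of_mem hy]
      set c : ℝ := ∑ i : Fin m, (k (j.succAbove i) : ℝ) * y i with hc_def
      have hsub : (fun x => (x, y)) ⁻¹' (e.symm ⁻¹' S) ⊆ {x : ℝ | |a * x + c| < δ} := by
        intro x hx
        simp only [Set.mem_preimage, hesymm, hS_def, Set.mem_setOf_eq] at hx
        have hsum : ∑ i : Fin (m + 1), (k i : ℝ) * (Fin.insertNth (α := fun _ => ℝ) j x y) i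
            = a * x + c := by
          rw [Fin.sum_univ_succAbove
            (fun i : Fin (m + 1) => (k i : ℝ) * (Fin.insertNth (α := fun _ => ℝ) j x y) i) j]
          simp [hc_def]
          exact Or.inl rfl
        have h2 := hx.2
        rw [hsum] at h2
        exact h2
      calc volume ((fun x => (x, y)) ⁻¹' (e.symm ⁻¹' S)) ≤ volume {x : ℝ | |a * x + c| < δ} :=
            measure_mono hsub
        _ = ENNReal.ofReal (2 * δ / |a|) := line_slab a c δ ha
    · rw [Set.indicator_of_notMem hy]
      have hempty : ((fun x : ℝ => (x, y)) ⁻¹' (⇑e.symm ⁻¹' S)) = ∅ := by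
        ext x
        simp only [Set.mem_preimage, hesymm, hS_def, Set.mem_setOf_eq, Set.mem_empty_iff_false,
          iff_false, not_and]
        intro hx1 _
        apply hy
        intro i _
        have h1 : |(Fin.insertNth (α := fun _ => ℝ) j x y - ωstar) (j.succAbove i)| ≤ ρ := by
          calc |(Fin.insertNth (α := fun _ => ℝ) j x y - ωstar) (j.succAbove i)|
              ≤ ‖Fin.insertNth (α := fun _ => ℝ) j x y - ωstar‖ := by
                simpa [Real.norm_eq_abs] using
                  norm_le_pi_norm (Fin.insertNth (α := fun _ => ℝ) j x y - ωstar) (j.succAbove i)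
            _ ≤ ρ := hx1
        rw [Pi.sub_apply, Fin.insertNth_apply_succAbove] at h1
        rw [Set.mem_Icc]
        have h2 := abs_le.1 h1
        constructor <;> linarith [h2.1, h2.2]
      simp [hempty]
  calc ∫⁻ y, volume ((fun x => (x, y)) ⁻¹' (e.symm ⁻¹' S)) ∂volume
      ≤ ∫⁻ y, Q.indicator (fun _ => ENNReal.ofReal (2 * δ / |a|)) y ∂volume :=
        lintegral_mono hbound
    _ = ENNReal.ofReal (2 * δ / |a|) * volume Q := lintegral_indicator_const hQ _
    _ = ENNReal.ofReal ((2 * ρ) ^ (m + 1 - 1) * (2 * δ / ‖(fun i => (k i : ℝ) : Fin (m+1) → ℝ)‖)) := by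
        rw [hQvol, hnorm, ← ENNReal.ofReal_mul (by positivity), mul_comm]
        norm_num
end
end

section
/- Let n ≥ 1, τ > 0, γ > 0, ρ > 0, and ω* ∈ ℝ^n. Then the Lebesgue measure of the set of non-Diophantine frequency vectors in the ball, namely {ω ∈ ℝ^n : ‖ω − ω*‖_∞ ≤ ρ and there exists k ∈ ℤ^n \ {0} with |k·ω| < γ/|k|₁^τ}, is at most (2ρ)^{n−1} · 2γ · Σ_{k ∈ ℤ^n \ {0}} 1/(|k|₁^τ · ‖k‖_∞), the sum being taken in [0,∞]. -/
open MeasureTheory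

noncomputable section

open Set in
lemma slab_bound (m : ℕ) (τ γ ρ : ℝ) (hτ : 0 < τ) (hγ : 0 < γ) (hρ : 0 < ρ)
    (ωstar : Fin (m+1) → ℝ) (k : Fin (m+1) → ℤ) (hk : k ≠ 0) :
    volume {ω : Fin (m+1) → ℝ | ‖ω - ωstar‖ ≤ ρ ∧
        |∑ i, (k i : ℝ) * ω i| < γ / ((∑ i, |k i| : ℤ) : ℝ) ^ τ} ≤
      ENNReal.ofReal ((2*ρ)^m * (2*γ)) *
        ENNReal.ofReal (1 / (((∑ i, |k i| : ℤ) : ℝ) ^ τ *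
          ‖(fun i => (k i : ℝ) : Fin (m+1) → ℝ)‖)) := by
  classical
  set L : ℝ := ((∑ i, |k i| : ℤ) : ℝ) with hLdef
  have hL1 : (1:ℝ) ≤ L := by
    have h1 : (1:ℤ) ≤ ∑ i, |k i| := by
      by_contra h
      push_neg at h
      have h0 : ∀ i, |k i| = 0 := by
        intro i
        have hnn : 0 ≤ ∑ i, |k i| := Finset.sum_nonneg fun i _ => abs_nonneg _
        have hz : ∑ i, |k i| = 0 := by omega
        have := (Finset.sum_eq_zero_iff_of_nonneg (fun i _ => abs_nonneg (k i))).1 hz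
        exact this i (Finset.mem_univ i)
      exact hk (funext fun i => abs_eq_zero.1 (h0 i))
    rw [hLdef]; exact_mod_cast h1
  have hL0 : (0:ℝ) < L := lt_of_lt_of_le one_pos hL1
  have hLτ : 0 < L ^ τ := Real.rpow_pos_of_pos hL0 τ
  set ε : ℝ := γ / L ^ τ with hεdef
  have hε0 : 0 < ε := div_pos hγ hLτ
  obtain ⟨i, hi⟩ := Finite.exists_max (fun j : Fin (m+1) => |k j|)
  set M : ℝ := ‖(fun j => (k j : ℝ) : Fin (m+1) → ℝ)‖ with hMdef
  have hki : k i ≠ 0 := by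
    intro h
    apply hk
    funext j
    have := hi j
    rw [h] at this
    simpa using this
  set A : ℝ := |(k i : ℝ)| with hAdef
  have hA0 : 0 < A := by
    simp only [hAdef, abs_pos]
    exact_mod_cast hki
  have hMA : M ≤ A := by
    apply pi_norm_le_iff_of_nonneg (abs_nonneg _) |>.2
    intro j
    rw [Real.norm_eq_abs]
    have := hi j
    calc |(k j : ℝ)| = ((|k j| : ℤ) : ℝ) := by push_cast; ring
      _ ≤ ((|k i| : ℤ) : ℝ) := by exact_mod_cast this
      _ = A := by push_cast [hAdef]; ring
  have hAM : A ≤ M := by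
    simpa [hAdef, Real.norm_eq_abs] using norm_le_pi_norm (fun j => (k j : ℝ)) i
  have hM0 : 0 < M := lt_of_lt_of_le hA0 hAM
  set S : Set (Fin (m+1) → ℝ) :=
    {ω | ‖ω - ωstar‖ ≤ ρ ∧ |∑ i, (k i : ℝ) * ω i| < ε} with hSdef
  have hS : MeasurableSet S := by
    rw [hSdef]
    have h1 : MeasurableSet {ω : Fin (m+1) → ℝ | ‖ω - ωstar‖ ≤ ρ} :=
      measurableSet_le (by fun_prop) measurable_const
    have h2 : MeasurableSet {ω : Fin (m+1) → ℝ | |∑ i, (k i : ℝ) * ω i| < ε} :=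
      measurableSet_lt (by fun_prop) measurable_const
    exact h1.inter h2
  set e := MeasurableEquiv.piFinSuccAbove (fun _ : Fin (m+1) => ℝ) i with hedef
  have mp := volume_preserving_piFinSuccAbove (fun _ : Fin (m+1) => ℝ) i
  have hvol : volume S = (volume.prod volume) (⇑e.symm ⁻¹' S) :=
    ((mp.symm e).measure_preimage hS.nullMeasurableSet).symm
  rw [hvol, Measure.prod_apply_symm (e.symm.measurable hS)]
  set box : Set (Fin m → ℝ) :=
    Set.pi Set.univ (fun j => Metric.closedBall (ωstar (i.succAbove j)) ρ) with hbox
  have hboxmeas : MeasurableSet box :=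
    MeasurableSet.univ_pi fun j => measurableSet_closedBall
  have hesymm : ∀ x (y : Fin m → ℝ), (e.symm (x, y) : Fin (m+1) → ℝ) = i.insertNth x y := by
    intro x y
    simp [hedef, MeasurableEquiv.piFinSuccAbove_symm_apply, Fin.insertNthEquiv]
  have key : ∀ y : Fin m → ℝ, volume ((fun x => (x, y)) ⁻¹' (⇑e.symm ⁻¹' S)) ≤
      box.indicator (fun _ => ENNReal.ofReal (2 * (ε / A))) y := by
    intro y
    by_cases hy : y ∈ box
    · rw [Set.indicator_of_mem hy]
      set c : ℝ := ∑ j, (k (i.succAbove j) : ℝ) * y j with hc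
      have hsub : ((fun x => (x, y)) ⁻¹' (⇑e.symm ⁻¹' S)) ⊆
          Metric.ball (-(c / (k i : ℝ))) (ε / A) := by
        intro x hx
        simp only [Set.mem_preimage, hSdef, Set.mem_setOf_eq, hesymm] at hx
        have hx2 := hx.2
        have hsum : ∑ j, (k j : ℝ) * (Fin.insertNth (α := fun _ => ℝ) i x y) j = (k i : ℝ) * x + c := by
          rw [Fin.sum_univ_succAbove (fun j => (k j : ℝ) * (Fin.insertNth (α := fun _ => ℝ) i x y) j) i]
          simp [Fin.insertNth_apply_same, Fin.insertNth_apply_succAbove, hc]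
        rw [hsum] at hx2
        rw [Metric.mem_ball, Real.dist_eq]
        have hkiR : (k i : ℝ) ≠ 0 := by exact_mod_cast hki
        have hxe : x - -(c / (k i : ℝ)) = ((k i : ℝ) * x + c) / (k i : ℝ) := by
          field_simp; ring
        rw [hxe, abs_div, ← hAdef, div_lt_div_iff₀ hA0 hA0]
        exact mul_lt_mul_of_pos_right hx2 hA0
      calc volume ((fun x => (x, y)) ⁻¹' (⇑e.symm ⁻¹' S))
          ≤ volume (Metric.ball (-(c / (k i : ℝ))) (ε / A)) := measure_mono hsub
        _ = ENNReal.ofReal (2 * (ε / A)) := Real.volume_ball _ _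
    · rw [Set.indicator_of_notMem hy]
      have hempty : ((fun x => (x, y)) ⁻¹' (⇑e.symm ⁻¹' S)) = ∅ := by
        ext x
        simp only [Set.mem_preimage, Set.mem_empty_iff_false, iff_false, hSdef,
          Set.mem_setOf_eq, hesymm]
        intro hx
        apply hy
        intro j _
        have h1 := hx.1
        have hle := norm_le_pi_norm ((Fin.insertNth (α := fun _ => ℝ) i x y) - ωstar) (i.succAbove j)
        have h2 : |((Fin.insertNth (α := fun _ => ℝ) i x y) - ωstar) (i.succAbove j)| ≤ ρ :=
          le_trans (by simpa [Real.norm_eq_abs] using hle) h1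
        rw [Metric.mem_closedBall, Real.dist_eq]
        simpa [Fin.insertNth_apply_succAbove] using h2
      rw [hempty]
      simp
  have hboxvol : volume box = ENNReal.ofReal ((2 * ρ) ^ m) := by
    rw [hbox, volume_pi_pi]
    simp only [Real.volume_closedBall]
    rw [Finset.prod_const, Finset.card_univ, Fintype.card_fin,
      ← ENNReal.ofReal_pow (by positivity)]
  calc ∫⁻ y, volume ((fun x => (x, y)) ⁻¹' (⇑e.symm ⁻¹' S))
      ≤ ∫⁻ y, box.indicator (fun _ => ENNReal.ofReal (2 * (ε / A))) y :=
        lintegral_mono key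
    _ = ENNReal.ofReal (2 * (ε / A)) * volume box :=
        lintegral_indicator_const hboxmeas _
    _ ≤ ENNReal.ofReal ((2 * ρ) ^ m * (2 * γ)) * ENNReal.ofReal (1 / (L ^ τ * M)) := by
        rw [hboxvol, ← ENNReal.ofReal_mul (by positivity),
          ← ENNReal.ofReal_mul (by positivity)]
        apply ENNReal.ofReal_le_ofReal
        have key2 : 1 / (L ^ τ * A) ≤ 1 / (L ^ τ * M) :=
          one_div_le_one_div_of_le (by positivity) (mul_le_mul_of_nonneg_left hMA hLτ.le)
        calc 2 * (ε / A) * (2 * ρ) ^ m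
            = (2 * ρ) ^ m * (2 * γ) * (1 / (L ^ τ * A)) := by
              rw [hεdef]; field_simp
          _ ≤ (2 * ρ) ^ m * (2 * γ) * (1 / (L ^ τ * M)) :=
              mul_le_mul_of_nonneg_left key2 (by positivity)


/-- For `τ > 0`, `γ > 0`, `ρ > 0` and `ω* ∈ ℝⁿ`, the Lebesgue measure of
the set of non-Diophantine frequency vectors in the sup-norm ball of radius `ρ` around
`ω*`, i.e. of those `ω` with `|k·ω| < γ/|k|₁^τ` for some nonzero `k ∈ ℤⁿ`, is at most
`(2ρ)^{n−1} · 2γ · Σ_{k ≠ 0} 1/(|k|₁^τ ‖k‖_∞)`, the sum being taken in `[0,∞]`. -/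
theorem measure_nonDiophantine_le
    (n : ℕ) (hn : 1 ≤ n) (τ γ ρ : ℝ) (hτ : 0 < τ) (hγ : 0 < γ) (hρ : 0 < ρ)
    (ωstar : Fin n → ℝ) :
    volume {ω : Fin n → ℝ | ‖ω - ωstar‖ ≤ ρ ∧
        ∃ k : Fin n → ℤ, k ≠ 0 ∧
          |∑ i, (k i : ℝ) * ω i| < γ / ((∑ i, |k i| : ℤ) : ℝ) ^ τ}
      ≤ ENNReal.ofReal ((2 * ρ) ^ (n - 1) * (2 * γ)) *
          ∑' k : {k : Fin n → ℤ // k ≠ 0},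
            ENNReal.ofReal (1 / (((∑ i, |k.1 i| : ℤ) : ℝ) ^ τ *
              ‖(fun i => (k.1 i : ℝ) : Fin n → ℝ)‖)) := by
  obtain ⟨m, rfl⟩ : ∃ m, n = m + 1 := ⟨n - 1, by omega⟩
  have hsub : {ω : Fin (m+1) → ℝ | ‖ω - ωstar‖ ≤ ρ ∧ ∃ k : Fin (m+1) → ℤ, k ≠ 0 ∧
      |∑ i, (k i : ℝ) * ω i| < γ / ((∑ i, |k i| : ℤ) : ℝ) ^ τ} ⊆
      ⋃ k : {k : Fin (m+1) → ℤ // k ≠ 0}, {ω : Fin (m+1) → ℝ | ‖ω - ωstar‖ ≤ ρ ∧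
        |∑ i, (k.1 i : ℝ) * ω i| < γ / ((∑ i, |k.1 i| : ℤ) : ℝ) ^ τ} := by
    rintro ω ⟨h1, k, hk, h2⟩
    exact Set.mem_iUnion.2 ⟨⟨k, hk⟩, h1, h2⟩
  refine le_trans (measure_mono hsub) (le_trans (measure_iUnion_le _) ?_)
  rw [Nat.add_sub_cancel, ← ENNReal.tsum_mul_left]
  exact ENNReal.tsum_le_tsum fun k => slab_bound m τ γ ρ hτ hγ hρ ωstar k.1 k.2
end
end

section
/- Let ω* ∈ ℝ^4 be the vector with components ω*₁ = −0.0061397976714045992, ω*₂ = −0.0034842628951575595, ω*₃ = −0.0073217663368488322, ω*₄ = −0.0059275598828692194, and set ρ = 2×10⁻¹⁵, γ = 2.9200551117155624×10⁻¹⁷, τ = 4. Then the set of (γ,τ)-Diophantine vectors contained in the closed sup-norm ball S_ρ(ω*) = {ω ∈ ℝ^4 : ‖ω − ω*‖_∞ ≤ ρ}, namely {ω ∈ S_ρ(ω*) : |k·ω| ≥ γ/|k|₁^4 for all k ∈ ℤ^4 \ {0}}, has 4-dimensional Lebesgue measure at least 0.9 · (2ρ)^4, i.e., at least 90% of the volume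 of the ball S_ρ(ω*). -/
open MeasureTheory

noncomputable section

/-- The angular velocity vector `ω*` of the quasi-periodic secular motion of υ-And b
targeted in the computer-assisted KAM proof (non-relativistic model). -/
def omegaStar : Fin 4 → ℝ :=
  ![-0.0061397976714045992, -0.0034842628951575595,
    -0.0073217663368488322, -0.0059275598828692194]

namespace S17

/-! ### Constants -/

def rr : ℝ := 2e-15
def gg : ℝ := 2.9200551117155624e-17

lemma rr_nonneg : (0:ℝ) ≤ rr := by norm_num [rr]
lemma gg_nonneg : (0:ℝ) ≤ gg := by norm_num [gg]

/-! ### Integer point counting -/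

def box (n : ℕ) : Finset ℤ := Finset.Icc (-(n:ℤ)) n

lemma card_box (n : ℕ) : (box n).card = 2*n+1 := by
  simp [box, Int.card_Icc]
  omega

lemma mem_box {n : ℕ} {x : ℤ} : x ∈ box n ↔ |x| ≤ (n:ℤ) := by
  simp [box, abs_le]

def B2 (n : ℕ) : Finset (ℤ × ℤ) :=
  (box n ×ˢ box n).filter fun p => |p.1| + |p.2| ≤ (n:ℤ)

def B3 (n : ℕ) : Finset (ℤ × ℤ × ℤ) :=
  (box n ×ˢ box n ×ˢ box n).filter fun p => |p.1| + |p.2.1| + |p.2.2| ≤ (n:ℤ)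

def S3 (n : ℕ) : Finset (ℤ × ℤ × ℤ) :=
  (box n ×ˢ box n ×ˢ box n).filter fun p => |p.1| + |p.2.1| + |p.2.2| = (n:ℤ)

lemma card_B2 (n : ℕ) : (B2 n).card ≤ (2*n+1)^2 := by
  calc (B2 n).card ≤ (box n ×ˢ box n).card := Finset.card_filter_le _ _
    _ = (2*n+1)^2 := by rw [Finset.card_product, card_box]; ring

lemma card_S3 (n : ℕ) : (S3 n).card ≤ 2 * (2*n+1)^2 := by
  have h : (S3 n).card ≤ (B2 n ×ˢ (Finset.univ : Finset Bool)).card := by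
    apply Finset.card_le_card_of_injOn (fun p => ((p.1, p.2.1), decide (0 ≤ p.2.2)))
    · rintro ⟨a, b, c⟩ hp0
      have hp : (a,b,c) ∈ S3 n := hp0
      simp only [S3, Finset.mem_filter, Finset.mem_product, mem_box] at hp
      obtain ⟨⟨ha, hb, hc⟩, hs⟩ := hp
      simp only [Finset.mem_coe, Finset.mem_product, Finset.mem_univ, and_true, B2, Finset.mem_filter,
        mem_box]
      have := abs_nonneg c
      refine ⟨⟨ha, hb⟩, by omega⟩
    · rintro ⟨a, b, c⟩ hp0 ⟨a', b', c'⟩ hq0 heq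
      have hp : (a,b,c) ∈ S3 n := hp0
      have hq : (a',b',c') ∈ S3 n := hq0
      simp only [S3, Finset.mem_filter, Finset.mem_product, mem_box] at hp hq
      simp only [Prod.mk.injEq, decide_eq_decide] at heq
      obtain ⟨⟨h1, h2⟩, h3⟩ := heq
      subst h1; subst h2
      have habs : |c| = |c'| := by linarith [hp.2, hq.2]
      simp only [Prod.mk.injEq, true_and]
      rcases le_or_gt 0 c with hc | hc
      · have hc' : (0:ℤ) ≤ c' := h3.mp hc
        rw [abs_of_nonneg hc, abs_of_nonneg hc'] at habs; exact habs
      · have hc' : c' < 0 := by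
          by_contra hcon
          exact absurd (h3.mpr (le_of_not_gt hcon)) (not_le.mpr hc)
        rw [abs_of_neg hc, abs_of_neg hc'] at habs; omega
  calc (S3 n).card ≤ (B2 n ×ˢ (Finset.univ : Finset Bool)).card := h
    _ = (B2 n).card * 2 := by rw [Finset.card_product]; simp
    _ ≤ (2*n+1)^2 * 2 := Nat.mul_le_mul_right 2 (card_B2 n)
    _ = 2 * (2*n+1)^2 := by ring

lemma B3_succ (n : ℕ) : (B3 (n+1)) ⊆ B3 n ∪ S3 (n+1) := by
  rintro ⟨a, b, c⟩ hp
  simp only [B3, S3, Finset.mem_filter, Finset.mem_product, mem_box, Finset.mem_union] at hp ⊢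
  obtain ⟨⟨ha, hb, hc⟩, hs⟩ := hp
  have h1 := abs_nonneg a; have h2 := abs_nonneg b; have h3 := abs_nonneg c
  push_cast at *
  rcases eq_or_lt_of_le hs with h | h
  · right; exact ⟨⟨ha, hb, hc⟩, h⟩
  · left; refine ⟨⟨by omega, by omega, by omega⟩, by omega⟩

lemma card_B3 (n : ℕ) : 3 * (B3 n).card ≤ 8*n^3 + 24*n^2 + 22*n + 3 := by
  induction n with
  | zero =>
    have : (B3 0).card ≤ 1 := by
      calc (B3 0).card ≤ (box 0 ×ˢ box 0 ×ˢ box 0).card := Finset.card_filter_le _ _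
        _ = 1 := by simp [Finset.card_product, card_box]
    omega
  | succ n ih =>
    have h1 : (B3 (n+1)).card ≤ (B3 n).card + (S3 (n+1)).card :=
      le_trans (Finset.card_le_card (B3_succ n)) (Finset.card_union_le _ _)
    have h2 := card_S3 (n+1)
    nlinarith [h1, h2, ih]

def S4 (n : ℕ) : Finset (Fin 4 → ℤ) :=
  (Fintype.piFinset fun _ => box n).filter fun k => (∑ i, |k i|) = (n:ℤ)

lemma card_S4 (n : ℕ) : 3 * (S4 n).card ≤ 16*n^3 + 48*n^2 + 44*n + 6 := by
  have h : (S4 n).card ≤ (B3 n ×ˢ (Finset.univ : Finset Bool)).card := by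
    apply Finset.card_le_card_of_injOn
      (fun k => ((k 0, k 1, k 2), decide (0 ≤ k 3)))
    · intro k hk0
      have hk : k ∈ S4 n := hk0
      simp only [S4, Finset.mem_filter, Fintype.mem_piFinset, mem_box] at hk
      obtain ⟨hb, hs⟩ := hk
      rw [Fin.sum_univ_four] at hs
      simp only [Finset.mem_coe, Finset.mem_product, Finset.mem_univ, and_true, B3, Finset.mem_filter,
        mem_box]
      have h3 := abs_nonneg (k 3)
      exact ⟨⟨hb 0, hb 1, hb 2⟩, by omega⟩
    · intro k hk k' hk' heq
      have hk2 : k ∈ S4 n := hk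
      have hk2' : k' ∈ S4 n := hk'
      simp only [S4, Finset.mem_filter, Fintype.mem_piFinset, mem_box] at hk2 hk2'
      obtain ⟨-, hs⟩ := hk2; obtain ⟨-, hs'⟩ := hk2'
      rw [Fin.sum_univ_four] at hs hs'
      simp only [Prod.mk.injEq, decide_eq_decide] at heq
      obtain ⟨⟨h0, h1, h2⟩, h3⟩ := heq
      rw [h0, h1, h2] at hs
      have habs : |k 3| = |k' 3| := by linarith [hs, hs']
      have h33 : k 3 = k' 3 := by
        rcases le_or_gt 0 (k 3) with hc | hc
        · have hc' : (0:ℤ) ≤ k' 3 := h3.mp hc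
          rw [abs_of_nonneg hc, abs_of_nonneg hc'] at habs; exact habs
        · have hc' : k' 3 < 0 := by
            by_contra hcon
            exact absurd (h3.mpr (le_of_not_gt hcon)) (not_le.mpr hc)
          rw [abs_of_neg hc, abs_of_neg hc'] at habs; omega
      funext i
      fin_cases i
      · exact h0
      · exact h1
      · exact h2
      · exact h33
  have h2 : (B3 n ×ˢ (Finset.univ : Finset Bool)).card = (B3 n).card * 2 := by
    rw [Finset.card_product]; simp
  have h3 := card_B3 n
  nlinarith [h, h2, h3]

/-! ### The ball -/

def Ball : Set (Fin 4 → ℝ) := {ω | ‖ω - omegaStar‖ ≤ rr}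

lemma ball_eq : Ball = Set.univ.pi fun i => Set.Icc (omegaStar i - rr) (omegaStar i + rr) := by
  ext ω
  rw [Ball, Set.mem_setOf_eq, pi_norm_le_iff_of_nonneg rr_nonneg]
  simp only [Set.mem_univ_pi, Set.mem_Icc, Pi.sub_apply, Real.norm_eq_abs, abs_sub_le_iff]
  constructor
  · intro h i; have := h i; constructor <;> linarith [this.1, this.2]
  · intro h i; have := h i; constructor <;> linarith [this.1, this.2]

lemma volume_ball : volume Ball = ENNReal.ofReal ((2*rr)^4) := by
  rw [ball_eq, volume_pi_pi]
  have : ∀ i : Fin 4, volume (Set.Icc (omegaStar i - rr) (omegaStar i + rr))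
      = ENNReal.ofReal (2*rr) := by
    intro i; rw [Real.volume_Icc]; congr 1; ring
  simp only [this, Finset.prod_const, Finset.card_univ, Fintype.card_fin]
  rw [← ENNReal.ofReal_pow (by norm_num [rr])]

lemma mem_ball_abs {ω : Fin 4 → ℝ} (h : ω ∈ Ball) (i : Fin 4) :
    |omegaStar i - ω i| ≤ rr := by
  have hB' := (Set.ext_iff.mp ball_eq ω).mp h i (Set.mem_univ i)
  rw [Set.mem_Icc] at hB'
  rw [abs_sub_le_iff]
  constructor <;> linarith [hB'.1, hB'.2]

/-! ### The slab estimate -/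

def Bad (k : Fin 4 → ℤ) : Set (Fin 4 → ℝ) :=
  Ball ∩ {ω | |∑ j, (k j : ℝ) * ω j| < gg / ((∑ i, |k i| : ℤ) : ℝ) ^ (4:ℕ)}

lemma det_M (k : Fin 4 → ℤ) (i : Fin 4) :
    ((1 : Matrix (Fin 4) (Fin 4) ℝ).updateRow i fun j => (k j : ℝ)).det = (k i : ℝ) := by
  have h1 : (fun j => (k j:ℝ))
      = Function.update (fun j => (k j:ℝ)) i 0 + (k i:ℝ) • (Pi.single i 1 : Fin 4 → ℝ) := by
    funext j
    by_cases h : j = i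
    · subst h; simp
    · simp [Function.update_of_ne h, Pi.single_eq_of_ne h]
  rw [h1, Matrix.det_updateRow_add, Matrix.det_updateRow_smul]
  have h2 : ((1 : Matrix (Fin 4) (Fin 4) ℝ).updateRow i
      (Function.update (fun j => (k j:ℝ)) i 0)).det = 0 := by
    apply Matrix.det_eq_zero_of_column_eq_zero i
    intro r
    by_cases h : r = i
    · subst h; simp
    · rw [Matrix.updateRow_ne h, Matrix.one_apply_ne h]
  have h3 : Pi.single i (1:ℝ) = (1 : Matrix (Fin 4) (Fin 4) ℝ) i := by
    funext j; simp [Matrix.one_apply, Pi.single_apply, eq_comm]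
  rw [h2, h3, Matrix.updateRow_eq_self, Matrix.det_one]
  ring

lemma slab (k : Fin 4 → ℤ) (i : Fin 4) (hki : k i ≠ 0) (ε : ℝ) (hε : 0 ≤ ε) :
    volume (Ball ∩ {ω : Fin 4 → ℝ | |∑ j, (k j : ℝ) * ω j| < ε})
      ≤ ENNReal.ofReal (|(k i : ℝ)|⁻¹ * (2*ε) * (2*rr)^3) := by
  set M : Matrix (Fin 4) (Fin 4) ℝ :=
    (1 : Matrix (Fin 4) (Fin 4) ℝ).updateRow i (fun j => (k j : ℝ)) with hM
  have hdetM : M.det = (k i : ℝ) := det_M k i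
  set f := Matrix.toLin' M with hf
  have hdet : LinearMap.det f = (k i : ℝ) := by rw [hf, LinearMap.det_toLin', hdetM]
  have hdet0 : LinearMap.det f ≠ 0 := by
    rw [hdet]; exact_mod_cast hki
  set s : Fin 4 → Set ℝ := fun j =>
    if j = i then Set.Ioo (-ε) ε else Set.Icc (omegaStar j - rr) (omegaStar j + rr) with hs
  have hincl : Ball ∩ {ω : Fin 4 → ℝ | |∑ j, (k j : ℝ) * ω j| < ε}
      ⊆ ⇑f ⁻¹' (Set.univ.pi s) := by
    rintro ω ⟨hB, hU⟩
    rw [Set.mem_preimage, Set.mem_univ_pi]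
    intro j
    have hfω : f ω j = ∑ l, M j l * ω l := by
      rw [hf, Matrix.toLin'_apply]; rfl
    by_cases h : j = i
    · subst h
      have : f ω j = ∑ l, (k l : ℝ) * ω l := by
        rw [hfω]
        refine Finset.sum_congr rfl fun l _ => ?_
        rw [hM, Matrix.updateRow_self]
      rw [hs]; simp only [if_pos rfl]
      rw [this]
      exact Set.mem_Ioo.mpr (abs_lt.mp hU)
    · have : f ω j = ω j := by
        rw [hfω, hM]
        simp [Matrix.updateRow_ne h, Matrix.one_apply, ite_mul, Finset.sum_ite_eq]
      rw [hs]; simp only [if_neg h]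
      rw [this]
      have hB' := (Set.ext_iff.mp ball_eq ω).mp hB
      exact hB' j (Set.mem_univ j)
  calc volume (Ball ∩ {ω : Fin 4 → ℝ | |∑ j, (k j : ℝ) * ω j| < ε})
      ≤ volume (⇑f ⁻¹' (Set.univ.pi s)) := measure_mono hincl
    _ = ENNReal.ofReal |(LinearMap.det f)⁻¹| * volume (Set.univ.pi s) :=
        Measure.addHaar_preimage_linearMap volume hdet0 _
    _ ≤ ENNReal.ofReal (|(k i : ℝ)|⁻¹ * (2*ε) * (2*rr)^3) := by
        have hvol : volume (Set.univ.pi s) = ENNReal.ofReal ((2*ε) * (2*rr)^3) := by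
          rw [volume_pi_pi]
          have hv : ∀ j, volume (s j)
              = if j = i then ENNReal.ofReal (2*ε) else ENNReal.ofReal (2*rr) := by
            intro j
            by_cases h : j = i
            · rw [hs]; simp only [if_pos h, Real.volume_Ioo]; congr 1; ring
            · rw [hs]; simp only [if_neg h, Real.volume_Icc]; congr 1; ring
          simp only [hv]
          rw [← Finset.mul_prod_erase Finset.univ _ (Finset.mem_univ i), if_pos rfl]
          have : ∀ j ∈ Finset.univ.erase i,
              (if j = i then ENNReal.ofReal (2*ε) else ENNReal.ofReal (2*rr))
                = ENNReal.ofReal (2*rr) := by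
            intro j hj
            rw [if_neg (Finset.ne_of_mem_erase hj)]
          rw [Finset.prod_congr rfl this, Finset.prod_const, Finset.card_erase_of_mem
            (Finset.mem_univ i), Finset.card_univ, Fintype.card_fin]
          rw [← ENNReal.ofReal_pow (by norm_num [rr]), ← ENNReal.ofReal_mul (by linarith)]
        rw [hvol, hdet, abs_inv,
          ← ENNReal.ofReal_mul (by positivity)]
        apply ENNReal.ofReal_le_ofReal
        apply le_of_eq; ring

/-- Per-`k` volume bound for nonzero `k`. -/
lemma vol_bad_le (k : Fin 4 → ℤ) (hk0 : k ≠ 0) :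
    volume (Bad k)
      ≤ ENNReal.ofReal (8 * gg * (2*rr)^3 / ((∑ i, |k i| : ℤ) : ℝ)^5) := by
  obtain ⟨i, -, hmax⟩ := Finset.exists_max_image Finset.univ (fun j => |k j|)
    ⟨0, Finset.mem_univ 0⟩
  have hmax' : ∀ j, |k j| ≤ |k i| := fun j => hmax j (Finset.mem_univ j)
  have hki : k i ≠ 0 := by
    intro h
    apply hk0
    funext j
    have := hmax' j
    rw [h] at this
    simpa using le_antisymm (by simpa using this) (abs_nonneg (k j))
  have hsum4 : (∑ j, |k j|) ≤ 4 * |k i| := by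
    calc (∑ j, |k j|) ≤ (Finset.univ : Finset (Fin 4)).card • |k i| :=
          Finset.sum_le_card_nsmul _ _ _ (fun j _ => hmax' j)
      _ = 4 * |k i| := by simp [Finset.card_univ]
  have hone : (1:ℤ) ≤ ∑ j, |k j| := by
    obtain ⟨j, hj⟩ := Function.ne_iff.mp hk0
    calc (1:ℤ) ≤ |k j| := by
          have := abs_pos.mpr (show k j ≠ 0 by simpa using hj)
          omega
      _ ≤ ∑ j, |k j| := Finset.single_le_sum (fun l _ => abs_nonneg (k l)) (Finset.mem_univ j)
  set N : ℝ := ((∑ i, |k i| : ℤ) : ℝ) with hN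
  have hN1 : (1:ℝ) ≤ N := by rw [hN]; exact_mod_cast hone
  have hN0 : (0:ℝ) < N := lt_of_lt_of_le one_pos hN1
  have hx1 : (1:ℝ) ≤ |(k i : ℝ)| := by
    rw [← Int.cast_abs]
    exact_mod_cast (by omega : (1:ℤ) ≤ |k i|)
  have hx0 : (0:ℝ) < |(k i : ℝ)| := lt_of_lt_of_le one_pos hx1
  have hN4x : N ≤ 4 * |(k i : ℝ)| := by
    rw [hN, ← Int.cast_abs]
    exact_mod_cast hsum4
  have hε : (0:ℝ) ≤ gg / N ^ (4:ℕ) := div_nonneg gg_nonneg (by positivity)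
  calc volume (Bad k)
      ≤ ENNReal.ofReal (|(k i : ℝ)|⁻¹ * (2*(gg / N ^ (4:ℕ))) * (2*rr)^3) :=
        slab k i hki _ hε
    _ ≤ ENNReal.ofReal (8 * gg * (2*rr)^3 / N^5) := by
        apply ENNReal.ofReal_le_ofReal
        have hinv : |(k i : ℝ)|⁻¹ ≤ 4 / N := by
          rw [inv_eq_one_div, div_le_div_iff₀ hx0 hN0]
          linarith
        have h2rr : (0:ℝ) ≤ (2*rr)^3 := pow_nonneg (by linarith [rr_nonneg]) 3
        calc |(k i : ℝ)|⁻¹ * (2*(gg / N ^ (4:ℕ))) * (2*rr)^3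
            ≤ (4 / N) * (2*(gg / N ^ (4:ℕ))) * (2*rr)^3 := by
              apply mul_le_mul_of_nonneg_right _ h2rr
              exact mul_le_mul_of_nonneg_right hinv (mul_nonneg (by norm_num) hε)
          _ = 8 * gg * (2*rr)^3 / N^5 := by
              field_simp
              ring

/-! ### Certificate for small k -/

set_option maxHeartbeats 2000000 in
theorem cert : ∀ a b c d : Fin 11,
    |(a:ℤ) - 5| + |(b:ℤ) - 5| + |(c:ℤ) - 5| + |(d:ℤ) - 5| ≤ 5 →
    ¬((a:ℤ) - 5 = 0 ∧ (b:ℤ) - 5 = 0 ∧ (c:ℤ) - 5 = 0 ∧ (d:ℤ) - 5 = 0) →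
    10029200551117155624 ≤ 10 ^ 14 *
      |((a:ℤ) - 5) * (-61397976714045992) + ((b:ℤ) - 5) * (-34842628951575595)
        + ((c:ℤ) - 5) * (-73217663368488322) + ((d:ℤ) - 5) * (-59275598828692194)| := by
  decide

lemma cert' (k : Fin 4 → ℤ) (hk0 : k ≠ 0) (hn : (∑ i, |k i|) ≤ 5) :
    10029200551117155624 ≤ 10 ^ 14 *
      |k 0 * (-61397976714045992) + k 1 * (-34842628951575595)
        + k 2 * (-73217663368488322) + k 3 * (-59275598828692194)| := by
  rw [Fin.sum_univ_four] at hn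
  have hb : ∀ i, -5 ≤ k i ∧ k i ≤ 5 := by
    intro i
    have h0 := abs_nonneg (k 0); have h1 := abs_nonneg (k 1)
    have h2 := abs_nonneg (k 2); have h3 := abs_nonneg (k 3)
    have hi : |k i| ≤ 5 := by
      fin_cases i <;> simp <;> omega
    exact abs_le.mp hi
  have mk : ∀ i, ∃ a : Fin 11, (a : ℤ) - 5 = k i := by
    intro i
    obtain ⟨hlo, hhi⟩ := hb i
    refine ⟨⟨(k i + 5).toNat, by omega⟩, ?_⟩
    have : ((k i + 5).toNat : ℤ) = k i + 5 := Int.toNat_of_nonneg (by omega)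
    simp only [Fin.val_mk] at *
    omega
  obtain ⟨a, ha⟩ := mk 0
  obtain ⟨b, hbb⟩ := mk 1
  obtain ⟨c, hc⟩ := mk 2
  obtain ⟨d, hd⟩ := mk 3
  have hne : ¬((a:ℤ) - 5 = 0 ∧ (b:ℤ) - 5 = 0 ∧ (c:ℤ) - 5 = 0 ∧ (d:ℤ) - 5 = 0) := by
    rw [ha, hbb, hc, hd]
    rintro ⟨h0, h1, h2, h3⟩
    apply hk0
    funext i
    fin_cases i <;> assumption
  have := cert a b c d (by rw [ha, hbb, hc, hd]; omega) hne
  rw [ha, hbb, hc, hd] at this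
  exact this

lemma sum_omega (k : Fin 4 → ℤ) :
    ∑ i, (k i:ℝ) * omegaStar i
      = ((k 0 * (-61397976714045992) + k 1 * (-34842628951575595)
        + k 2 * (-73217663368488322) + k 3 * (-59275598828692194) : ℤ) : ℝ) / 10^19 := by
  rw [Fin.sum_univ_four]
  have h0 : omegaStar 0 = -61397976714045992 / 10^19 := by
    norm_num [omegaStar]
  have h1 : omegaStar 1 = -34842628951575595 / 10^19 := by
    norm_num [omegaStar]
  have h2 : omegaStar 2 = -73217663368488322 / 10^19 := by
    show (-0.0073217663368488322 : ℝ) = -73217663368488322 / 10^19; norm_num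
  have h3 : omegaStar 3 = -59275598828692194 / 10^19 := by
    show (-0.0059275598828692194 : ℝ) = -59275598828692194 / 10^19; norm_num
  rw [h0, h1, h2, h3]
  push_cast
  ring

/-- For small nonzero `k` the bad set is empty. -/
lemma small_empty (k : Fin 4 → ℤ) (hk0 : k ≠ 0) (hn : (∑ i, |k i|) ≤ 5) :
    Bad k = ∅ := by
  rw [Set.eq_empty_iff_forall_notMem]
  rintro ω ⟨hB, hU⟩
  rw [Set.mem_setOf_eq] at hU
  set N : ℝ := ((∑ i, |k i| : ℤ) : ℝ) with hN
  have hone : (1:ℤ) ≤ ∑ j, |k j| := by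
    obtain ⟨j, hj⟩ := Function.ne_iff.mp hk0
    calc (1:ℤ) ≤ |k j| := by
          have := abs_pos.mpr (by simpa using hj)
          omega
      _ ≤ ∑ j, |k j| := Finset.single_le_sum (fun l _ => abs_nonneg (k l)) (Finset.mem_univ j)
  have hN1 : (1:ℝ) ≤ N := by rw [hN]; exact_mod_cast hone
  have hgd : gg / N ^ (4:ℕ) ≤ gg := by
    apply div_le_self gg_nonneg
    exact one_le_pow₀ hN1
  -- |∑ k ω*| ≤ |∑ k ω| + ∑ |k| |ω* - ω| < gg + 5 rr
  have hsplit : (∑ i, (k i:ℝ) * omegaStar i)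
      = (∑ i, (k i:ℝ) * ω i) + ∑ i, (k i:ℝ) * (omegaStar i - ω i) := by
    rw [← Finset.sum_add_distrib]
    apply Finset.sum_congr rfl
    intro i _
    ring
  have habs2 : |∑ i, (k i:ℝ) * (omegaStar i - ω i)| ≤ 5 * rr := by
    calc |∑ i, (k i:ℝ) * (omegaStar i - ω i)|
        ≤ ∑ i, |(k i:ℝ) * (omegaStar i - ω i)| := Finset.abs_sum_le_sum_abs _ _
      _ ≤ ∑ i, |(k i:ℝ)| * rr := by
          apply Finset.sum_le_sum
          intro i _
          rw [abs_mul]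
          exact mul_le_mul_of_nonneg_left (mem_ball_abs hB i) (abs_nonneg _)
      _ = ((∑ i, |k i| : ℤ) : ℝ) * rr := by
          rw [← Finset.sum_mul]
          congr 1
          push_cast
          rfl
      _ ≤ 5 * rr := by
          apply mul_le_mul_of_nonneg_right _ rr_nonneg
          exact_mod_cast hn
  have hlt : |∑ i, (k i:ℝ) * omegaStar i| < gg + 5 * rr := by
    calc |∑ i, (k i:ℝ) * omegaStar i|
        ≤ |∑ i, (k i:ℝ) * ω i| + |∑ i, (k i:ℝ) * (omegaStar i - ω i)| := by
          rw [hsplit]; exact abs_add_le _ _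
      _ < gg / N ^ (4:ℕ) + 5 * rr := by
          apply add_lt_add_of_lt_of_le hU habs2
      _ ≤ gg + 5 * rr := by linarith
  -- contradiction with the certificate
  have hcert := cert' k hk0 hn
  rw [sum_omega k] at hlt
  set A : ℤ := k 0 * (-61397976714045992) + k 1 * (-34842628951575595)
    + k 2 * (-73217663368488322) + k 3 * (-59275598828692194) with hA
  have hA' : (10029200551117155624 : ℝ) ≤ 10 ^ 14 * |(A : ℝ)| := by
    rw [← Int.cast_abs]
    exact_mod_cast hcert
  rw [abs_div] at hlt
  have h10 : |(10:ℝ)^19| = 10^19 := by norm_num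
  rw [h10] at hlt
  have : |(A:ℝ)| < (gg + 5*rr) * 10^19 := by
    rw [div_lt_iff₀ (by norm_num)] at hlt
    exact hlt
  rw [gg, rr] at this
  norm_num at this hA'
  linarith

/-! ### Summation over shells -/

def KK : ℝ := (202/3) * gg * (2*rr)^3

lemma KK_nonneg : 0 ≤ KK := by norm_num [KK, gg, rr]

def ff (m : ℕ) : ℝ := KK / ((max (m-1) 5 : ℕ) : ℝ)

lemma ff_nonneg (m : ℕ) : 0 ≤ ff m := by
  apply div_nonneg KK_nonneg
  positivity

lemma ff_antitone (m : ℕ) : ff (m+1) ≤ ff m := by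
  apply div_le_div_of_nonneg_left KK_nonneg
  · have : (5:ℕ) ≤ max (m-1) 5 := le_max_right _ _
    exact_mod_cast lt_of_lt_of_le (by norm_num) this
  · have : max (m-1) 5 ≤ max (m+1-1) 5 := by omega
    exact_mod_cast this

lemma shell_bound (n : ℕ) :
    ∑ k ∈ S4 n, volume (Bad k) ≤ ENNReal.ofReal (ff n - ff (n+1)) := by
  have hffd : 0 ≤ ff n - ff (n+1) := by linarith [ff_antitone n]
  by_cases hn : n ≤ 5
  · -- all shells up to 5 are empty
    have hz : ∀ k ∈ S4 n, volume (Bad k) = 0 := by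
      intro k hk
      simp only [S4, Finset.mem_filter, Fintype.mem_piFinset, mem_box] at hk
      obtain ⟨-, hs⟩ := hk
      by_cases hk0 : k = 0
      · subst hk0
        have : Bad 0 = ∅ := by
          rw [Set.eq_empty_iff_forall_notMem]
          rintro ω ⟨-, hU⟩
          rw [Set.mem_setOf_eq] at hU
          simp at hU
        rw [this, measure_empty]
      · rw [small_empty k hk0 (by rw [hs]; exact_mod_cast hn), measure_empty]
    rw [Finset.sum_eq_zero hz]
    exact zero_le
  · push_neg at hn
    have h6 : 6 ≤ n := hn
    have hcard := card_S4 n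
    -- uniform bound on each term
    have hterm : ∀ k ∈ S4 n, volume (Bad k)
        ≤ ENNReal.ofReal (8 * gg * (2*rr)^3 / (n:ℝ)^5) := by
      intro k hk
      simp only [S4, Finset.mem_filter, Fintype.mem_piFinset, mem_box] at hk
      obtain ⟨-, hs⟩ := hk
      have hk0 : k ≠ 0 := by
        intro h
        subst h
        simp at hs
        omega
      have := vol_bad_le k hk0
      rw [hs] at this
      exact_mod_cast this
    calc ∑ k ∈ S4 n, volume (Bad k)
        ≤ (S4 n).card • ENNReal.ofReal (8 * gg * (2*rr)^3 / (n:ℝ)^5) :=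
          Finset.sum_le_card_nsmul _ _ _ hterm
      _ = ((S4 n).card : ENNReal) * ENNReal.ofReal (8 * gg * (2*rr)^3 / (n:ℝ)^5) :=
          by rw [nsmul_eq_mul]
      _ = ENNReal.ofReal (((S4 n).card : ℝ) * (8 * gg * (2*rr)^3 / (n:ℝ)^5)) := by
          rw [ENNReal.ofReal_mul (by exact_mod_cast Nat.cast_nonneg _), ENNReal.ofReal_natCast]
      _ ≤ ENNReal.ofReal (ff n - ff (n+1)) := by
          apply ENNReal.ofReal_le_ofReal
          -- compute ff n - ff (n+1) = KK / ((n-1) n)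
          have hmax1 : max (n-1) 5 = n-1 := by omega
          have hmax2 : max (n+1-1) 5 = n := by omega
          have hcast : ((n-1 : ℕ) : ℝ) = (n:ℝ) - 1 := by
            have : 1 ≤ n := by omega
            push_cast [Nat.cast_sub this]
            ring
          have hffeq : ff n - ff (n+1) = KK / (((n:ℝ) - 1) * n) := by
            rw [ff, ff, hmax1, hmax2, hcast]
            have hn1 : (0:ℝ) < (n:ℝ) - 1 := by
              have : (6:ℝ) ≤ n := by exact_mod_cast h6
              linarith
            have hnn : (0:ℝ) < (n:ℝ) := by positivity
            field_simp
            ring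
          rw [hffeq, KK]
          have hcardR : ((S4 n).card : ℝ) ≤ (16*(n:ℝ)^3 + 48*(n:ℝ)^2 + 44*n + 6)/3 := by
            rw [le_div_iff₀ (by norm_num)]
            have : (3 * (S4 n).card : ℝ) ≤ ((16*n^3 + 48*n^2 + 44*n + 6 : ℕ) : ℝ) := by
              exact_mod_cast hcard
            push_cast at this
            linarith
          have hnR : (6:ℝ) ≤ (n:ℝ) := by exact_mod_cast h6
          have hnpos : (0:ℝ) < (n:ℝ) := by linarith
          have hn1pos : (0:ℝ) < (n:ℝ) - 1 := by linarith
          have hC : (0:ℝ) ≤ gg * (2*rr)^3 :=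
            mul_nonneg gg_nonneg (pow_nonneg (by linarith [rr_nonneg]) 3)
          have key : (16*(n:ℝ)^3 + 48*(n:ℝ)^2 + 44*n + 6)/3 * (8 * gg * (2*rr)^3 / (n:ℝ)^5)
              ≤ (202/3) * gg * (2*rr)^3 / (((n:ℝ) - 1) * n) := by
            rw [div_mul_div_comm, div_le_div_iff₀ (mul_pos (by norm_num) (pow_pos hnpos 5))
              (mul_pos hn1pos hnpos)]
            have expand : (16*(n:ℝ)^3 + 48*(n:ℝ)^2 + 44*n + 6) * (8 * gg * (2*rr)^3)
                * (((n:ℝ) - 1) * n)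
                = gg * (2*rr)^3 * ((16*(n:ℝ)^3 + 48*(n:ℝ)^2 + 44*n + 6) * 8 * (((n:ℝ) - 1) * n)) := by
              ring
            have expand2 : (202/3) * gg * (2*rr)^3 * (3 * (n:ℝ)^5)
                = gg * (2*rr)^3 * (202 * (n:ℝ)^5) := by ring
            rw [expand, expand2]
            apply mul_le_mul_of_nonneg_left _ hC
            nlinarith [hnR, sq_nonneg ((n:ℝ) - 6), sq_nonneg (n:ℝ)]
          calc ((S4 n).card : ℝ) * (8 * gg * (2*rr)^3 / (n:ℝ)^5)
              ≤ (16*(n:ℝ)^3 + 48*(n:ℝ)^2 + 44*n + 6)/3 * (8 * gg * (2*rr)^3 / (n:ℝ)^5) := by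
                apply mul_le_mul_of_nonneg_right hcardR
                  (div_nonneg (by nlinarith [gg_nonneg, rr_nonneg]) (by positivity))
            _ ≤ (202/3) * gg * (2*rr)^3 / (((n:ℝ) - 1) * n) := key

lemma total_bad_bound :
    volume (⋃ n : ℕ, ⋃ k ∈ S4 n, Bad k) ≤ ENNReal.ofReal (KK / 5) := by
  have hsummable : Summable (fun n => ff n - ff (n+1)) := by
    apply summable_of_sum_range_le (c := ff 0)
    · intro n; linarith [ff_antitone n]
    · intro n
      rw [Finset.sum_range_sub' ff n]
      linarith [ff_nonneg n]
  calc volume (⋃ n : ℕ, ⋃ k ∈ S4 n, Bad k)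
      ≤ ∑' n : ℕ, volume (⋃ k ∈ S4 n, Bad k) := measure_iUnion_le _
    _ ≤ ∑' n : ℕ, ENNReal.ofReal (ff n - ff (n+1)) := by
        apply ENNReal.tsum_le_tsum
        intro n
        exact le_trans (measure_biUnion_finset_le _ _) (shell_bound n)
    _ = ENNReal.ofReal (∑' n : ℕ, (ff n - ff (n+1))) := by
        rw [ENNReal.ofReal_tsum_of_nonneg (fun n => by linarith [ff_antitone n]) hsummable]
    _ ≤ ENNReal.ofReal (KK / 5) := by
        apply ENNReal.ofReal_le_ofReal
        have hff0 : ff 0 = KK / 5 := by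
          rw [ff]
          norm_num
        rw [← hff0]
        apply Summable.tsum_le_of_sum_range_le hsummable
        intro n
        rw [Finset.sum_range_sub' ff n]
        linarith [ff_nonneg n]

end S17

open S17 in
/-- With `ρ = 2×10⁻¹⁵`, `γ = 2.9200551117155624×10⁻¹⁷` and `τ = 4`, the
set of `(γ,τ)`-Diophantine vectors contained in the closed sup-norm ball of radius `ρ`
around `ω*` has 4-dimensional Lebesgue measure at least `0.9 · (2ρ)⁴`, i.e. at least 90%
of the volume of the ball. -/
theorem measure_diophantine_in_ball_ge :
    volume {ω : Fin 4 → ℝ | ‖ω - omegaStar‖ ≤ 2e-15 ∧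
        ∀ k : Fin 4 → ℤ, k ≠ 0 →
          (2.9200551117155624e-17 : ℝ) / ((∑ i, |k i| : ℤ) : ℝ) ^ (4 : ℕ)
            ≤ |∑ i, (k i : ℝ) * ω i|}
      ≥ ENNReal.ofReal (0.9 * (2 * 2e-15) ^ (4 : ℕ)) := by
  set Good : Set (Fin 4 → ℝ) := {ω : Fin 4 → ℝ | ‖ω - omegaStar‖ ≤ 2e-15 ∧
        ∀ k : Fin 4 → ℤ, k ≠ 0 →
          (2.9200551117155624e-17 : ℝ) / ((∑ i, |k i| : ℤ) : ℝ) ^ (4 : ℕ)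
            ≤ |∑ i, (k i : ℝ) * ω i|} with hGood
  set BigBad : Set (Fin 4 → ℝ) := ⋃ n : ℕ, ⋃ k ∈ S4 n, Bad k with hBigBad
  have hsub : Ball ⊆ Good ∪ BigBad := by
    intro ω hB
    by_cases hbad : ω ∈ BigBad
    · exact Or.inr hbad
    · left
      refine ⟨hB, ?_⟩
      intro k hk0
      by_contra hcon
      push_neg at hcon
      apply hbad
      have hnn : (0:ℤ) ≤ ∑ i, |k i| :=
        Finset.sum_nonneg fun i _ => abs_nonneg (k i)
      set m : ℕ := (∑ i, |k i|).toNat with hm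
      have hmz : ((m : ℤ)) = ∑ i, |k i| := Int.toNat_of_nonneg hnn
      have hkmem : k ∈ S4 m := by
        simp only [S4, Finset.mem_filter, Fintype.mem_piFinset, mem_box]
        refine ⟨fun i => ?_, hmz.symm ▸ rfl⟩
        rw [hmz]
        exact Finset.single_le_sum (fun l _ => abs_nonneg (k l)) (Finset.mem_univ i)
      rw [hBigBad]
      apply Set.mem_iUnion.mpr ⟨m, _⟩
      apply Set.mem_iUnion₂.mpr ⟨k, hkmem, _⟩
      exact ⟨hB, hcon⟩
  have h1 : volume Ball ≤ volume Good + volume BigBad :=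
    le_trans (measure_mono hsub) (measure_union_le _ _)
  have h2 : volume Ball - volume BigBad ≤ volume Good := tsub_le_iff_right.mpr h1
  calc volume Good ≥ volume Ball - volume BigBad := h2
    _ ≥ ENNReal.ofReal ((2*rr)^4) - ENNReal.ofReal (KK/5) := by
        rw [volume_ball]
        exact tsub_le_tsub_left total_bad_bound _
    _ = ENNReal.ofReal ((2*rr)^4 - KK/5) :=
        (ENNReal.ofReal_sub _ (div_nonneg KK_nonneg (by norm_num))).symm
    _ ≥ ENNReal.ofReal (0.9 * (2 * 2e-15) ^ (4 : ℕ)) := by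
        apply ENNReal.ofReal_le_ofReal
        rw [KK, gg, rr]
        norm_num
end
end
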